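/- arXiv:1604.08775 — 2 statements merged into one kernel-verified Lean document; each statement's English description precedes it below -/
import Mathlib

section
/- If G is a k-gate, then G admits a Helly EPT representation on a host tree of maximum degree k; moreover, the host tree can be taken to be a star with k leaves. -/
/-- A maximal clique (a maximal complete vertex set) of a simple graph. -/
def IsMaxClique {V : Type} (G : SimpleGraph V) (s : Set V) : Prop :=
  G.IsClique s ∧ ∀ t : Set V, G.IsClique t → s ⊆ t → s = t

/-- The number of maximal cliques of a graph. -/
noncomputable def numMaxCliques {V : Type} (G : SimpleGraph V) : ℕ :=
  {s : Set V | IsMaxClique G s}.ncard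

/-- A "good labelling": each vertex gets an unordered pair of clique indices. -/
structure GoodLab {V : Type} (G : SimpleGraph V) (ι : Type) where
  c1 : V → ι
  c2 : V → ι
  ne : ∀ v, c1 v ≠ c2 v
  adj : ∀ v w : V, v ≠ w →
    (G.Adj v w ↔ (({c1 v, c2 v} : Set ι) ∩ {c1 w, c2 w}).Nonempty)
  helly : ∀ u v w : V,
    (({c1 u, c2 u} : Set ι) ∩ {c1 v, c2 v}).Nonempty →
    (({c1 v, c2 v} : Set ι) ∩ {c1 w, c2 w}).Nonempty →
    (({c1 u, c2 u} : Set ι) ∩ {c1 w, c2 w}).Nonempty →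
    (({c1 u, c2 u} : Set ι) ∩ {c1 v, c2 v} ∩ {c1 w, c2 w}).Nonempty
  dmax : ∀ i j : ι, {v | c1 v = i ∨ c2 v = i} ⊆ {v | c1 v = j ∨ c2 v = j} → i = j
  dne : ∀ i : ι, {v | c1 v = i ∨ c2 v = i}.Nonempty

namespace GoodLab

variable {V ι : Type} {G : SimpleGraph V} (L : GoodLab G ι)

def pair (v : V) : Set ι := {L.c1 v, L.c2 v}

def D (i : ι) : Set V := {v | L.c1 v = i ∨ L.c2 v = i}

lemma mem_D_iff {i : ι} {v : V} : v ∈ L.D i ↔ i ∈ L.pair v := by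
  simp [D, pair, eq_comm]

lemma adj_iff {v w : V} (h : v ≠ w) :
    G.Adj v w ↔ (L.pair v ∩ L.pair w).Nonempty := L.adj v w h

lemma commonIndex {S : Set V} (hS : S.Nonempty)
    (h : ∀ u ∈ S, ∀ v ∈ S, (L.pair u ∩ L.pair v).Nonempty) :
    ∃ c, ∀ v ∈ S, c ∈ L.pair v := by
  obtain ⟨u, hu⟩ := hS
  by_cases h1 : ∀ v ∈ S, L.c1 u ∈ L.pair v
  · exact ⟨L.c1 u, h1⟩
  · push_neg at h1
    obtain ⟨v0, hv0, hv0'⟩ := h1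
    refine ⟨L.c2 u, fun w hw => ?_⟩
    obtain ⟨t, ht⟩ := L.helly u v0 w (h u hu v0 hv0) (h v0 hv0 w hw) (h u hu w hw)
    have h2 : t ∈ L.pair u := ht.1.1
    have h3 : t = L.c1 u ∨ t = L.c2 u := h2
    rcases h3 with h3 | h3
    · exact absurd (h3 ▸ ht.1.2) hv0'
    · exact h3 ▸ ht.2

lemma isClique_D (i : ι) : G.IsClique (L.D i) := by
  intro v hv w hw hvw
  rw [L.adj_iff hvw]
  exact ⟨i, (L.mem_D_iff.mp hv), (L.mem_D_iff.mp hw)⟩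

lemma clique_subset {s : Set V} (hs : G.IsClique s) [Nonempty ι] :
    ∃ i, s ⊆ L.D i := by
  rcases s.eq_empty_or_nonempty with rfl | hne
  · exact ⟨Classical.arbitrary ι, by simp⟩
  · obtain ⟨c, hc⟩ := L.commonIndex hne (fun u hu v hv => by
      rcases eq_or_ne u v with rfl | huv
      · exact ⟨L.c1 u, by simp [pair], by simp [pair]⟩
      · exact (L.adj_iff huv).mp (hs hu hv huv))
    exact ⟨c, fun v hv => L.mem_D_iff.mpr (hc v hv)⟩

lemma isMaxClique_iff [Nonempty ι] {s : Set V} :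
    IsMaxClique G s ↔ ∃ i, s = L.D i := by
  constructor
  · rintro ⟨hs, hmax⟩
    obtain ⟨i, hi⟩ := L.clique_subset hs
    exact ⟨i, hmax _ (L.isClique_D i) hi⟩
  · rintro ⟨i, rfl⟩
    refine ⟨L.isClique_D i, fun t ht hsub => ?_⟩
    obtain ⟨j, hj⟩ := L.clique_subset ht
    have : i = j := L.dmax i j (hsub.trans hj)
    subst this
    exact le_antisymm hsub hj

lemma D_injective : Function.Injective L.D :=
  fun i j h => L.dmax i j h.le

include L in
lemma count [Nonempty ι] [Finite ι] : numMaxCliques G = Nat.card ι := by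
  have hset : {s : Set V | IsMaxClique G s} = Set.range L.D := by
    ext s
    simp [L.isMaxClique_iff, Set.mem_setOf_eq, Set.mem_range, eq_comm]
  rw [numMaxCliques, hset, ← Nat.card_coe_set_eq,
    Nat.card_range_of_injective (GoodLab.D_injective L)]

end GoodLab

section Star

variable {ι : Type}

def starG (ι : Type) : SimpleGraph (Option ι) where
  Adj x y := x ≠ y ∧ (x = none ∨ y = none)
  symm := ⟨by rintro x y ⟨h1, h2⟩; exact ⟨h1.symm, h2.symm⟩⟩
  loopless := ⟨by rintro x ⟨h1, _⟩; exact h1 rfl⟩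

lemma starG_adj {x y : Option ι} : (starG ι).Adj x y ↔ x ≠ y ∧ (x = none ∨ y = none) :=
  Iff.rfl

lemma starG_connected [Nonempty ι] : (starG ι).Connected := by
  have hreach : ∀ x : Option ι, (starG ι).Reachable x none := by
    intro x
    rcases x with _ | i
    · rfl
    · exact SimpleGraph.Adj.reachable ⟨by simp, Or.inr rfl⟩
  exact ⟨fun x y => (hreach x).trans (hreach y).symm⟩

lemma starG_not_nodup (r : (starG ι).Walk (none : Option ι) none)
    (hr : r ≠ SimpleGraph.Walk.nil) : ¬ r.support.Nodup := by
  cases r with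
  | nil => exact absurd rfl hr
  | cons h r' =>
    intro hnd
    rw [SimpleGraph.Walk.support_cons] at hnd
    exact (List.nodup_cons.mp hnd).1 r'.end_mem_support

lemma starG_no_cycle_at_none (q : (starG ι).Walk (none : Option ι) none) : ¬ q.IsCycle := by
  intro hp'
  cases q with
  | nil => exact hp'.ne_nil rfl
  | cons h1 r1 =>
    cases r1 with
    | nil => exact h1.1 rfl
    | @cons _ x2 _ h2 r2 =>
      have hx1 : _ ≠ (none : Option ι) := fun h => h1.1 h.symm
      have hx2 : x2 = none := by
        rcases h2.2 with h | h
        · exact absurd h hx1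
        · exact h
      subst hx2
      have hnd := hp'.support_nodup
      rw [SimpleGraph.Walk.support_cons, List.tail_cons, SimpleGraph.Walk.support_cons,
        List.nodup_cons] at hnd
      refine starG_not_nodup r2 ?_ hnd.2
      intro hnil
      have h3 := hp'.three_le_length
      rw [hnil] at h3
      simp [SimpleGraph.Walk.length_cons] at h3

lemma starG_acyclic : (starG ι).IsAcyclic := by
  classical
  intro v p hp
  have hnone : (none : Option ι) ∈ p.support := by
    cases p with
    | nil => exact absurd hp.ne_nil (by simp)
    | cons h q =>
      rcases h.2 with h2 | h2
      · subst h2; exact SimpleGraph.Walk.start_mem_support _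
      · rw [SimpleGraph.Walk.support_cons]
        exact List.mem_cons_of_mem _ (h2 ▸ q.start_mem_support)
  exact starG_no_cycle_at_none _ (hp.rotate hnone)

lemma starG_isTree [Nonempty ι] : (starG ι).IsTree :=
  ⟨starG_connected, starG_acyclic⟩

end Star

/-- The graph obtained from `G` and a chordless path on `l` new vertices by joining the
first vertex of the path to every vertex of `A` and the last vertex to every vertex of `B`. -/
def joinPath {V : Type} (G : SimpleGraph V) (A B : Set V) (l : ℕ) :
    SimpleGraph (V ⊕ Fin l) where
  Adj x y :=
    match x, y with
    | Sum.inl a, Sum.inl b => G.Adj a b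
    | Sum.inl a, Sum.inr i => (i.val = 0 ∧ a ∈ A) ∨ (i.val = l - 1 ∧ a ∈ B)
    | Sum.inr i, Sum.inl a => (i.val = 0 ∧ a ∈ A) ∨ (i.val = l - 1 ∧ a ∈ B)
    | Sum.inr i, Sum.inr j => i.val + 1 = j.val ∨ j.val + 1 = i.val
  symm := ⟨by
    rintro (a | i) (b | j) h <;> simp_all <;> tauto⟩
  loopless := ⟨by
    rintro (a | i) h
    · exact G.irrefl h
    · rcases h with h | h <;> omega⟩

/-- Gates, defined recursively (up to isomorphism): chordless cycles `Cₙ`, `n ≥ 4`, are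
gates, and joining a new chordless path to two disjoint maximal cliques of a gate
yields a gate. -/
inductive IsGate : {V : Type} → SimpleGraph V → Prop
  | cycle (n : ℕ) (hn : 4 ≤ n) : IsGate (SimpleGraph.cycleGraph n)
  | extend {V : Type} (G : SimpleGraph V) (C C' : Set V) (l : ℕ)
      (hG : IsGate G) (hC : IsMaxClique G C) (hC' : IsMaxClique G C')
      (hdisj : Disjoint C C') (hl : 2 ≤ l) : IsGate (joinPath G C C' l)
  | iso {V W : Type} (G : SimpleGraph V) (H : SimpleGraph W)
      (hG : IsGate G) (e : G ≃g H) : IsGate H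

/-- An EPT representation of `G`: a family of paths in a host tree such that two distinct
vertices are adjacent iff their paths share an edge of the tree. -/
structure EPTRep {V : Type} (G : SimpleGraph V) where
  VT : Type
  T : SimpleGraph VT
  tree : T.IsTree
  src : V → VT
  tgt : V → VT
  walk : (v : V) → T.Walk (src v) (tgt v)
  isPath : ∀ v, (walk v).IsPath
  adj_iff : ∀ v w : V, v ≠ w →
    (G.Adj v w ↔ ∃ e : Sym2 VT, e ∈ (walk v).edges ∧ e ∈ (walk w).edges)

/-- The edge set of the path representing `v`. -/
def EPTRep.edges {V : Type} {G : SimpleGraph V} (R : EPTRep G) (v : V) :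
    Set (Sym2 R.VT) := {e | e ∈ (R.walk v).edges}

/-- The representation is Helly: every nonempty pairwise edge-intersecting subfamily of
paths has a common edge. -/
def EPTRep.Helly {V : Type} {G : SimpleGraph V} (R : EPTRep G) : Prop :=
  ∀ S : Set V, S.Nonempty →
    (∀ u ∈ S, ∀ v ∈ S, (R.edges u ∩ R.edges v).Nonempty) →
    (⋂ v ∈ S, R.edges v).Nonempty

/-- The host tree has maximum degree at most `h`. -/
def EPTRep.maxDegLE {V : Type} {G : SimpleGraph V} (R : EPTRep G) (h : ℕ) : Prop :=
  ∀ x : R.VT, (R.T.neighborSet x).ncard ≤ h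

/-- The class `[h,2,2]`. -/
def InEPTClass (h : ℕ) {V : Type} (G : SimpleGraph V) : Prop :=
  ∃ R : EPTRep G, R.maxDegLE h

/-- Helly EPT graphs. -/
def IsHellyEPT {V : Type} (G : SimpleGraph V) : Prop :=
  ∃ R : EPTRep G, R.Helly

/-- The class Helly `[h,2,2]`. -/
def InHellyClass (h : ℕ) {V : Type} (G : SimpleGraph V) : Prop :=
  ∃ R : EPTRep G, R.Helly ∧ R.maxDegLE h

/-- Three paths of the representation form a claw at some claw of the host tree. -/
def EPTRep.FormsClaw {V : Type} {G : SimpleGraph V} (R : EPTRep G) (a b c : V) : Prop :=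
  ∃ q x y z : R.VT, R.T.Adj q x ∧ R.T.Adj q y ∧ R.T.Adj q z ∧
    x ≠ y ∧ y ≠ z ∧ x ≠ z ∧
    s(q, x) ∈ R.edges a ∧ s(q, y) ∈ R.edges a ∧
    s(q, y) ∈ R.edges b ∧ s(q, z) ∈ R.edges b ∧
    s(q, x) ∈ R.edges c ∧ s(q, z) ∈ R.edges c

/-- A multipie of size `k` whose paths are those representing the vertices in `S`. -/
def IsMultipie {V : Type} {G : SimpleGraph V} (R : EPTRep G) (k : ℕ) (S : Set V) : Prop :=
  ∃ (q : R.VT) (qi : Fin k → R.VT), Function.Injective qi ∧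
    (∀ i, R.T.Adj q (qi i)) ∧
    (∀ v ∈ S, {i : Fin k | qi i ∈ (R.walk v).support}.ncard = 2) ∧
    (∀ u ∈ S, ∀ v ∈ S, ∀ i j : Fin k, i ≠ j →
      qi i ∈ (R.walk u).support → qi j ∈ (R.walk u).support →
      qi i ∈ (R.walk v).support → qi j ∈ (R.walk v).support → u = v) ∧
    (∀ i, 2 ≤ {v ∈ S | s(q, qi i) ∈ R.edges v}.ncard) ∧
    (∀ a ∈ S, ∀ b ∈ S, ∀ c ∈ S, ¬ R.FormsClaw a b c)

/-- The next index around a cycle. -/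
def finNext {k : ℕ} (hk : 0 < k) (i : Fin k) : Fin k :=
  ⟨(i.val + 1) % k, Nat.mod_lt _ hk⟩

/-- `G` has a clique separator: a complete vertex set whose removal disconnects the graph. -/
def HasCliqueSep {V : Type} (G : SimpleGraph V) : Prop :=
  ∃ C : Set V, G.IsClique C ∧ ¬ (G.induce Cᶜ).Preconnected

/-- An atom of `G`: a maximal vertex subset inducing a connected subgraph without clique
separators. -/
def IsAtomOf {V : Type} (G : SimpleGraph V) (A : Set V) : Prop :=
  (G.induce A).Connected ∧ ¬ HasCliqueSep (G.induce A) ∧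
    ∀ B : Set V, A ⊆ B → (G.induce B).Connected → ¬ HasCliqueSep (G.induce B) → A = B

section Build

variable {V ι : Type} {G : SimpleGraph V}

def starWalk (a b : ι) : (starG ι).Walk (some a) (some b) :=
  .cons ⟨Option.some_ne_none a, Or.inr rfl⟩
    (.cons ⟨fun h => Option.some_ne_none b h.symm, Or.inl rfl⟩ .nil)

lemma mem_starWalk_edges {a b : ι} {e : Sym2 (Option ι)} :
    e ∈ (starWalk a b).edges ↔ e = s(none, some a) ∨ e = s(none, some b) := by
  show e ∈ (SimpleGraph.Walk.cons (show (starG ι).Adj (some a) none from ⟨Option.some_ne_none a, Or.inr rfl⟩) (SimpleGraph.Walk.cons (show (starG ι).Adj none (some b) from ⟨fun h => Option.some_ne_none b h.symm, Or.inl rfl⟩) SimpleGraph.Walk.nil)).edges ↔ _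
  simp [Sym2.eq_swap]

lemma starWalk_isPath {a b : ι} (h : a ≠ b) : (starWalk a b).IsPath := by
  rw [SimpleGraph.Walk.isPath_def]
  show (SimpleGraph.Walk.cons (show (starG ι).Adj (some a) none from ⟨Option.some_ne_none a, Or.inr rfl⟩) (SimpleGraph.Walk.cons (show (starG ι).Adj none (some b) from ⟨fun h => Option.some_ne_none b h.symm, Or.inl rfl⟩) SimpleGraph.Walk.nil)).support.Nodup
  simp [h]

lemma sym2_none_some {x y : ι} :
    s((none : Option ι), some x) = s((none : Option ι), some y) ↔ x = y := by
  rw [Sym2.eq_iff]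
  simp

lemma starWalk_inter {a b a' b' : ι} :
    (∃ e, e ∈ (starWalk a b).edges ∧ e ∈ (starWalk a' b').edges) ↔
      (({a, b} : Set ι) ∩ {a', b'}).Nonempty := by
  constructor
  · rintro ⟨e, he, he'⟩
    rw [mem_starWalk_edges] at he he'
    rcases he with rfl | rfl <;> rcases he' with h | h <;>
      rw [sym2_none_some] at h
    · exact ⟨a, by simp, by simp [h]⟩
    · exact ⟨a, by simp, by simp [h]⟩
    · exact ⟨b, by simp, by simp [h]⟩
    · exact ⟨b, by simp, by simp [h]⟩
  · rintro ⟨c, hc, hc'⟩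
    refine ⟨s(none, some c), ?_, ?_⟩ <;> rw [mem_starWalk_edges]
    · rcases hc with rfl | hc
      · exact Or.inl rfl
      · exact Or.inr (by rw [Set.mem_singleton_iff] at hc; rw [hc])
    · rcases hc' with rfl | hc'
      · exact Or.inl rfl
      · exact Or.inr (by rw [Set.mem_singleton_iff] at hc'; rw [hc'])

def GoodLab.rep [Nonempty ι] (L : GoodLab G ι) : EPTRep G where
  VT := Option ι
  T := starG ι
  tree := starG_isTree
  src v := some (L.c1 v)
  tgt v := some (L.c2 v)
  walk v := starWalk (L.c1 v) (L.c2 v)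
  isPath v := starWalk_isPath (L.ne v)
  adj_iff v w hvw := by
    rw [L.adj_iff hvw]
    show _ ↔ ∃ e, e ∈ (starWalk (L.c1 v) (L.c2 v)).edges ∧ e ∈ (starWalk (L.c1 w) (L.c2 w)).edges
    rw [starWalk_inter]
    rfl

lemma GoodLab.rep_helly [Nonempty ι] (L : GoodLab G ι) : L.rep.Helly := by
  intro S hS hpair
  have h' : ∀ u ∈ S, ∀ v ∈ S, (L.pair u ∩ L.pair v).Nonempty := by
    intro u hu v hv
    obtain ⟨e, he, he'⟩ := hpair u hu v hv
    exact starWalk_inter.mp ⟨e, he, he'⟩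
  obtain ⟨c, hc⟩ := L.commonIndex hS h'
  refine ⟨s(none, some c), Set.mem_iInter₂.mpr fun v hv => ?_⟩
  show s((none : Option ι), some c) ∈ (starWalk (L.c1 v) (L.c2 v)).edges
  rw [mem_starWalk_edges]
  rcases hc v hv with h | h
  · exact Or.inl (by rw [h])
  · rw [Set.mem_singleton_iff] at h
    exact Or.inr (by rw [h])

lemma ncard_ne_none : {x : Option ι | x ≠ none}.ncard = Nat.card ι := by
  have h : {x : Option ι | x ≠ none} = Set.range some := by
    ext x
    simp [Option.ne_none_iff_exists, Set.mem_range, eq_comm]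
  rw [h, ← Nat.card_coe_set_eq, Nat.card_range_of_injective (Option.some_injective ι)]

lemma GoodLab.rep_maxDeg [Nonempty ι] [Finite ι] (L : GoodLab G ι) :
    L.rep.maxDegLE (Nat.card ι) := by
  rintro (_ | i)
  · have h : (starG ι).neighborSet none = {x : Option ι | x ≠ none} := by
      ext y
      simp [SimpleGraph.neighborSet, starG_adj, ne_comm]
    show ((starG ι).neighborSet none).ncard ≤ _
    rw [h, ncard_ne_none]
  · have h : (starG ι).neighborSet (some i) = {none} := by
      ext y
      constructor
      · rintro ⟨h1, h2 | h2⟩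
        · exact absurd h2 (Option.some_ne_none i)
        · exact h2
      · rintro rfl
        exact ⟨Option.some_ne_none i, Or.inr rfl⟩
    show ((starG ι).neighborSet (some i)).ncard ≤ _
    rw [h, Set.ncard_singleton]
    exact Nat.one_le_iff_ne_zero.mpr (Nat.card_ne_zero.mpr ⟨‹Nonempty ι›, ‹Finite ι›⟩)

end Build

lemma pair_inter_nonempty {α : Type} {p q r s : α} :
    (({p, q} : Set α) ∩ {r, s}).Nonempty ↔ (p = r ∨ p = s ∨ q = r ∨ q = s) := by
  constructor
  · rintro ⟨t, ht1, ht2⟩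
    simp only [Set.mem_insert_iff, Set.mem_singleton_iff] at ht1 ht2
    rcases ht1 with rfl | rfl <;> tauto
  · rintro (h | h | h | h)
    · exact ⟨p, by simp, by simp [h]⟩
    · exact ⟨p, by simp, by simp [h]⟩
    · exact ⟨q, by simp, by simp [h]⟩
    · exact ⟨q, by simp, by simp [h]⟩

lemma mem_pair_left {α : Type} {p q : α} : p ∈ ({p, q} : Set α) := by simp
lemma mem_pair_right {α : Type} {p q : α} : q ∈ ({p, q} : Set α) := by simp

lemma natHelly {i j m : ℕ}
    (h1 : i = j ∨ i = j+1 ∨ j = i+1) (h2 : j = m ∨ j = m+1 ∨ m = j+1)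
    (h3 : i = m ∨ i = m+1 ∨ m = i+1) :
    ∃ t, (t = i ∨ t = i+1) ∧ (t = j ∨ t = j+1) ∧ (t = m ∨ t = m+1) :=
  ⟨max i (max j m), by omega, by omega, by omega⟩

section Extend

variable {ι : Type} {a b : ι} {l : ℕ}

/-- The sequence of clique indices along the attached path. -/
def xmap (a b : ι) (l : ℕ) (j : ℕ) : ι ⊕ Fin (l - 1) :=
  if j = 0 then .inl a else if h : j - 1 < l - 1 then .inr ⟨j - 1, h⟩ else .inl b

lemma xmap_zero : xmap a b l 0 = .inl a := rfl

lemma xmap_last (hl : 2 ≤ l) : xmap a b l l = .inl b := by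
  have h1 : l ≠ 0 := by omega
  have h2 : ¬ (l - 1 < l - 1) := lt_irrefl _
  simp [xmap, h1, h2]

lemma xmap_mid (hl : 2 ≤ l) {j : ℕ} (h1 : 1 ≤ j) (h2 : j ≤ l - 1) :
    xmap a b l j = .inr ⟨j - 1, by omega⟩ := by
  have h3 : j ≠ 0 := by omega
  have h4 : j - 1 < l - 1 := by omega
  simp [xmap, h3, h4]

lemma xmap_eq_inl (hl : 2 ≤ l) {j : ℕ} {c : ι} (h : j ≤ l) :
    xmap a b l j = .inl c ↔ (j = 0 ∧ c = a) ∨ (j = l ∧ c = b) := by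
  constructor
  · intro he
    rcases Nat.eq_zero_or_pos j with rfl | hj
    · rw [xmap_zero] at he
      exact Or.inl ⟨rfl, (Sum.inl.injEq _ _ ▸ he).symm⟩
    · rcases Nat.lt_or_ge j l with hjl | hjl
      · rw [xmap_mid hl hj (by omega)] at he
        exact absurd he (by simp)
      · have : j = l := by omega
        subst this
        rw [xmap_last hl] at he
        exact Or.inr ⟨rfl, (Sum.inl.injEq _ _ ▸ he).symm⟩
  · rintro (⟨rfl, rfl⟩ | ⟨rfl, rfl⟩)
    · exact xmap_zero
    · exact xmap_last hl

lemma xmap_eq_inr (hl : 2 ≤ l) {j : ℕ} {e : Fin (l - 1)} (h : j ≤ l) :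
    xmap a b l j = .inr e ↔ j = e.val + 1 := by
  constructor
  · intro he
    rcases Nat.eq_zero_or_pos j with rfl | hj
    · rw [xmap_zero] at he; exact absurd he (by simp)
    · rcases Nat.lt_or_ge j l with hjl | hjl
      · rw [xmap_mid hl hj (by omega)] at he
        have := (Sum.inr.injEq _ _ ▸ he)
        have h2 : j - 1 = e.val := congrArg Fin.val this
        omega
      · have : j = l := by omega
        subst this
        rw [xmap_last hl] at he
        exact absurd he (by simp)
  · rintro rfl
    rw [xmap_mid hl (by omega) (by omega)]
    exact congrArg Sum.inr (Fin.ext (by simp))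

lemma xmap_inj (hl : 2 ≤ l) (hab : a ≠ b) {j1 j2 : ℕ} (h1 : j1 ≤ l) (h2 : j2 ≤ l)
    (he : xmap a b l j1 = xmap a b l j2) : j1 = j2 := by
  rcases hx : xmap a b l j2 with c | e
  · rw [hx] at he
    rw [xmap_eq_inl hl h1] at he
    rw [xmap_eq_inl hl h2] at hx
    rcases he with ⟨rfl, rfl⟩ | ⟨rfl, rfl⟩ <;> rcases hx with ⟨h, h'⟩ | ⟨h, h'⟩ <;>
      first | omega | exact absurd h' hab | exact absurd h'.symm hab
  · rw [hx] at he
    rw [xmap_eq_inr hl h1] at he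
    rw [xmap_eq_inr hl h2] at hx
    omega

end Extend

lemma extend_goodLab {V ι : Type} {G : SimpleGraph V} [Nonempty ι] (L : GoodLab G ι)
    (C C' : Set V) (l : ℕ) (hC : IsMaxClique G C) (hC' : IsMaxClique G C')
    (hdisj : Disjoint C C') (hl : 2 ≤ l) :
    Nonempty (GoodLab (joinPath G C C' l) (ι ⊕ Fin (l - 1))) := by
  classical
  obtain ⟨a, ha⟩ := L.isMaxClique_iff.mp hC
  obtain ⟨b, hb⟩ := L.isMaxClique_iff.mp hC'
  have memC : ∀ v : V, v ∈ C ↔ (L.c1 v = a ∨ L.c2 v = a) := by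
    intro v; rw [ha]; rfl
  have memC' : ∀ v : V, v ∈ C' ↔ (L.c1 v = b ∨ L.c2 v = b) := by
    intro v; rw [hb]; rfl
  have hab : a ≠ b := by
    rintro rfl
    obtain ⟨v, hv⟩ := L.dne a
    have hvC : v ∈ C := by rw [ha]; exact hv
    have hvC' : v ∈ C' := by rw [hb]; exact hv
    exact Set.disjoint_left.mp hdisj hvC hvC'
  set X : ℕ → ι ⊕ Fin (l - 1) := xmap a b l with hX
  set c1' : V ⊕ Fin l → ι ⊕ Fin (l - 1) :=
    Sum.elim (fun v => Sum.inl (L.c1 v)) (fun i : Fin l => X i.val) with hc1'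
  set c2' : V ⊕ Fin l → ι ⊕ Fin (l - 1) :=
    Sum.elim (fun v => Sum.inl (L.c2 v)) (fun i : Fin l => X (i.val + 1)) with hc2'
  have hinj : ∀ {j1 j2 : ℕ}, j1 ≤ l → j2 ≤ l → X j1 = X j2 → j1 = j2 :=
    fun h1 h2 he => xmap_inj hl hab h1 h2 he
  have hvl : ∀ i : Fin l, i.val ≤ l := fun i => le_of_lt i.isLt
  have hvl1 : ∀ i : Fin l, i.val + 1 ≤ l := fun i => i.isLt
  -- the "extraction" lemma for a mixed intersection
  have hextract : ∀ (p : V) (i : Fin l),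
      (({Sum.inl (L.c1 p), Sum.inl (L.c2 p)} : Set (ι ⊕ Fin (l - 1))) ∩ {X i.val, X (i.val + 1)}).Nonempty →
      (i.val = 0 ∧ (L.c1 p = a ∨ L.c2 p = a)) ∨
        (i.val + 1 = l ∧ (L.c1 p = b ∨ L.c2 p = b)) := by
    intro p i h
    rw [pair_inter_nonempty] at h
    rcases h with h | h | h | h
    · rcases (xmap_eq_inl hl (hvl i)).mp h.symm with ⟨h1, h2⟩ | ⟨h1, h2⟩
      · exact Or.inl ⟨h1, Or.inl h2⟩
      · exact absurd h1 (by omega)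
    · rcases (xmap_eq_inl hl (hvl1 i)).mp h.symm with ⟨h1, h2⟩ | ⟨h1, h2⟩
      · exact absurd h1 (by omega)
      · exact Or.inr ⟨h1, Or.inl h2⟩
    · rcases (xmap_eq_inl hl (hvl i)).mp h.symm with ⟨h1, h2⟩ | ⟨h1, h2⟩
      · exact Or.inl ⟨h1, Or.inr h2⟩
      · exact absurd h1 (by omega)
    · rcases (xmap_eq_inl hl (hvl1 i)).mp h.symm with ⟨h1, h2⟩ | ⟨h1, h2⟩
      · exact absurd h1 (by omega)
      · exact Or.inr ⟨h1, Or.inr h2⟩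
  have hamem : ∀ (p : V), (L.c1 p = a ∨ L.c2 p = a) →
      Sum.inl a ∈ ({Sum.inl (L.c1 p), Sum.inl (L.c2 p)} : Set (ι ⊕ Fin (l - 1))) := by
    rintro p (h | h) <;> rw [← h] <;> simp
  have hbmem : ∀ (p : V), (L.c1 p = b ∨ L.c2 p = b) →
      Sum.inl b ∈ ({Sum.inl (L.c1 p), Sum.inl (L.c2 p)} : Set (ι ⊕ Fin (l - 1))) := by
    rintro p (h | h) <;> rw [← h] <;> simp
  -- common element for two old vertices and one new vertex
  have H2 : ∀ (p q : V) (i : Fin l),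
      (({Sum.inl (L.c1 p), Sum.inl (L.c2 p)} : Set (ι ⊕ Fin (l - 1))) ∩ {X i.val, X (i.val + 1)}).Nonempty →
      (({Sum.inl (L.c1 q), Sum.inl (L.c2 q)} : Set (ι ⊕ Fin (l - 1))) ∩ {X i.val, X (i.val + 1)}).Nonempty →
      ∃ t : ι ⊕ Fin (l - 1), t ∈ ({Sum.inl (L.c1 p), Sum.inl (L.c2 p)} : Set (ι ⊕ Fin (l - 1))) ∧
        t ∈ ({Sum.inl (L.c1 q), Sum.inl (L.c2 q)} : Set (ι ⊕ Fin (l - 1))) ∧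
        t ∈ ({X i.val, X (i.val + 1)} : Set (ι ⊕ Fin (l - 1))) := by
    intro p q i h1 h2
    rcases hextract p i h1 with ⟨hi0, hp⟩ | ⟨hil, hp⟩ <;>
      rcases hextract q i h2 with ⟨hi0', hq⟩ | ⟨hil', hq⟩
    · refine ⟨Sum.inl a, hamem p hp, hamem q hq, ?_⟩
      have : X i.val = Sum.inl a := by rw [hi0]; exact xmap_zero
      rw [← this]; exact mem_pair_left
    · omega
    · omega
    · refine ⟨Sum.inl b, hbmem p hp, hbmem q hq, ?_⟩
      have : X (i.val + 1) = Sum.inl b := by rw [hil']; exact xmap_last hl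
      rw [← this]; exact mem_pair_right
  -- common element for one old vertex and two new vertices
  have H3 : ∀ (p : V) (i j : Fin l),
      (({Sum.inl (L.c1 p), Sum.inl (L.c2 p)} : Set (ι ⊕ Fin (l - 1))) ∩ {X i.val, X (i.val + 1)}).Nonempty →
      (({Sum.inl (L.c1 p), Sum.inl (L.c2 p)} : Set (ι ⊕ Fin (l - 1))) ∩ {X j.val, X (j.val + 1)}).Nonempty →
      ∃ t : ι ⊕ Fin (l - 1), t ∈ ({Sum.inl (L.c1 p), Sum.inl (L.c2 p)} : Set (ι ⊕ Fin (l - 1))) ∧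
        t ∈ ({X i.val, X (i.val + 1)} : Set (ι ⊕ Fin (l - 1))) ∧
        t ∈ ({X j.val, X (j.val + 1)} : Set (ι ⊕ Fin (l - 1))) := by
    intro p i j h1 h2
    rcases hextract p i h1 with ⟨hi0, hp⟩ | ⟨hil, hp⟩ <;>
      rcases hextract p j h2 with ⟨hj0, hq⟩ | ⟨hjl, hq⟩
    · refine ⟨Sum.inl a, hamem p hp, ?_, ?_⟩
      · have : X i.val = Sum.inl a := by rw [hi0]; exact xmap_zero
        rw [← this]; exact mem_pair_left
      · have : X j.val = Sum.inl a := by rw [hj0]; exact xmap_zero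
        rw [← this]; exact mem_pair_left
    · exact absurd (Set.disjoint_left.mp hdisj ((memC p).mpr hp) ((memC' p).mpr hq))
        (fun h => h)
    · exact absurd (Set.disjoint_left.mp hdisj ((memC p).mpr hq) ((memC' p).mpr hp))
        (fun h => h)
    · refine ⟨Sum.inl b, hbmem p hp, ?_, ?_⟩
      · have : X (i.val + 1) = Sum.inl b := by rw [hil]; exact xmap_last hl
        rw [← this]; exact mem_pair_right
      · have : X (j.val + 1) = Sum.inl b := by rw [hjl]; exact xmap_last hl
        rw [← this]; exact mem_pair_right
  -- nat-level reduction for two new vertices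
  have toNat : ∀ (i j : Fin l),
      (({X i.val, X (i.val + 1)} : Set (ι ⊕ Fin (l - 1))) ∩ {X j.val, X (j.val + 1)}).Nonempty →
      (i.val = j.val ∨ i.val = j.val + 1 ∨ j.val = i.val + 1) := by
    intro i j h
    rw [pair_inter_nonempty] at h
    rcases h with h | h | h | h
    · exact Or.inl (hinj (hvl i) (hvl j) h)
    · exact Or.inr (Or.inl (hinj (hvl i) (hvl1 j) h))
    · exact Or.inr (Or.inr (hinj (hvl j) (hvl1 i) h.symm))
    · exact Or.inl (by have := hinj (hvl1 i) (hvl1 j) h; omega)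
  have H4 : ∀ (i j m : Fin l),
      (({X i.val, X (i.val + 1)} : Set (ι ⊕ Fin (l - 1))) ∩ {X j.val, X (j.val + 1)}).Nonempty →
      (({X j.val, X (j.val + 1)} : Set (ι ⊕ Fin (l - 1))) ∩ {X m.val, X (m.val + 1)}).Nonempty →
      (({X i.val, X (i.val + 1)} : Set (ι ⊕ Fin (l - 1))) ∩ {X m.val, X (m.val + 1)}).Nonempty →
      ∃ t : ι ⊕ Fin (l - 1), t ∈ ({X i.val, X (i.val + 1)} : Set (ι ⊕ Fin (l - 1))) ∧
        t ∈ ({X j.val, X (j.val + 1)} : Set (ι ⊕ Fin (l - 1))) ∧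
        t ∈ ({X m.val, X (m.val + 1)} : Set (ι ⊕ Fin (l - 1))) := by
    intro i j m h1 h2 h3
    obtain ⟨t, hti, htj, htm⟩ := natHelly (toNat i j h1) (toNat j m h2) (toNat i m h3)
    refine ⟨X t, ?_, ?_, ?_⟩
    · rcases hti with rfl | rfl
      · exact mem_pair_left
      · exact mem_pair_right
    · rcases htj with rfl | rfl
      · exact mem_pair_left
      · exact mem_pair_right
    · rcases htm with rfl | rfl
      · exact mem_pair_left
      · exact mem_pair_right
  -- the mixed adjacency characterization
  have adjlr : ∀ (v : V) (i : Fin l),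
      ((joinPath G C C' l).Adj (.inl v) (.inr i) ↔
        (({c1' (.inl v), c2' (.inl v)} : Set (ι ⊕ Fin (l - 1))) ∩ {c1' (.inr i), c2' (.inr i)}).Nonempty) := by
    intro v i
    show ((i.val = 0 ∧ v ∈ C) ∨ (i.val = l - 1 ∧ v ∈ C')) ↔
      (({Sum.inl (L.c1 v), Sum.inl (L.c2 v)} : Set (ι ⊕ Fin (l - 1))) ∩ {X i.val, X (i.val + 1)}).Nonempty
    constructor
    · rintro (⟨hi0, hvC⟩ | ⟨hil, hvC'⟩)
      · refine ⟨Sum.inl a, hamem v ((memC v).mp hvC), ?_⟩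
        have : X i.val = Sum.inl a := by rw [hi0]; exact xmap_zero
        rw [← this]; exact mem_pair_left
      · refine ⟨Sum.inl b, hbmem v ((memC' v).mp hvC'), ?_⟩
        have hiv : i.val + 1 = l := by have := i.isLt; omega
        have : X (i.val + 1) = Sum.inl b := by rw [hiv]; exact xmap_last hl
        rw [← this]; exact mem_pair_right
    · intro h
      rcases hextract v i h with ⟨hi0, hp⟩ | ⟨hil, hp⟩
      · exact Or.inl ⟨hi0, (memC v).mpr hp⟩
      · exact Or.inr ⟨by omega, (memC' v).mpr hp⟩
  refine ⟨⟨c1', c2', ?_, ?_, ?_, ?_, ?_⟩⟩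
  · -- ne
    rintro (v | i)
    · exact fun h => L.ne v (Sum.inl_injective h)
    · intro h
      have h' : X i.val = X (i.val + 1) := h
      have := hinj (hvl i) (hvl1 i) h'
      omega
  · -- adj
    rintro (v | i) (w | j) hne
    · have hvw : v ≠ w := fun h => hne (congrArg _ h)
      show G.Adj v w ↔ _
      rw [L.adj v w hvw]
      simp only [hc1', hc2', Sum.elim_inl]
      rw [pair_inter_nonempty, pair_inter_nonempty]
      simp [Sum.inl.injEq]
    · exact adjlr v j
    · rw [(joinPath G C C' l).adj_comm, Set.inter_comm]
      exact adjlr w i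
    · have hij : i.val ≠ j.val := fun h => hne (congrArg _ (Fin.ext h))
      show (i.val + 1 = j.val ∨ j.val + 1 = i.val) ↔ _
      simp only [hc1', hc2', Sum.elim_inr]
      rw [pair_inter_nonempty]
      constructor
      · rintro (h | h)
        · exact Or.inr (Or.inr (Or.inl (by rw [h])))
        · exact Or.inr (Or.inl (by rw [← h]))
      · rintro (h | h | h | h)
        · exact absurd (hinj (hvl i) (hvl j) h) hij
        · have := hinj (hvl i) (hvl1 j) h; omega
        · have := hinj (hvl1 i) (hvl j) h; omega
        · have := hinj (hvl1 i) (hvl1 j) h; omega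
  · -- helly
    rintro (p | i) (q | j) (r | m) h1 h2 h3 <;>
      simp only [hc1', hc2', Sum.elim_inl, Sum.elim_inr] at h1 h2 h3 ⊢
    · -- lll
      have conv : ∀ s t : V,
          (({Sum.inl (L.c1 s), Sum.inl (L.c2 s)} : Set (ι ⊕ Fin (l - 1))) ∩
            {Sum.inl (L.c1 t), Sum.inl (L.c2 t)}).Nonempty →
          (({L.c1 s, L.c2 s} : Set ι) ∩ {L.c1 t, L.c2 t}).Nonempty := by
        intro s t h
        rw [pair_inter_nonempty] at h
        rw [pair_inter_nonempty]
        simpa [Sum.inl.injEq] using h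
      obtain ⟨t, ⟨ht1, ht2⟩, ht3⟩ := L.helly p q r (conv _ _ h1) (conv _ _ h2) (conv _ _ h3)
      refine ⟨Sum.inl t, ⟨?_, ?_⟩, ?_⟩
      · rcases ht1 with rfl | ht1
        · exact mem_pair_left
        · rw [Set.mem_singleton_iff] at ht1; rw [ht1]; exact mem_pair_right
      · rcases ht2 with rfl | ht2
        · exact mem_pair_left
        · rw [Set.mem_singleton_iff] at ht2; rw [ht2]; exact mem_pair_right
      · rcases ht3 with rfl | ht3
        · exact mem_pair_left
        · rw [Set.mem_singleton_iff] at ht3; rw [ht3]; exact mem_pair_right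
    · -- llr
      obtain ⟨t, hp, hq, hi⟩ := H2 p q m h3 h2
      exact ⟨t, ⟨hp, hq⟩, hi⟩
    · -- lrl
      rw [Set.inter_comm] at h2
      obtain ⟨t, hp, hq, hi⟩ := H2 p r j h1 h2
      exact ⟨t, ⟨hp, hi⟩, hq⟩
    · -- lrr
      obtain ⟨t, hp, hi, hj⟩ := H3 p j m h1 h3
      exact ⟨t, ⟨hp, hi⟩, hj⟩
    · -- rll
      rw [Set.inter_comm] at h1 h3
      obtain ⟨t, hp, hq, hi⟩ := H2 q r i h1 h3
      exact ⟨t, ⟨hi, hp⟩, hq⟩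
    · -- rlr
      rw [Set.inter_comm] at h1
      obtain ⟨t, hp, hi, hj⟩ := H3 q i m h1 h2
      exact ⟨t, ⟨hi, hp⟩, hj⟩
    · -- rrl
      rw [Set.inter_comm] at h2 h3
      obtain ⟨t, hp, hi, hj⟩ := H3 r i j h3 h2
      exact ⟨t, ⟨hi, hj⟩, hp⟩
    · -- rrr
      obtain ⟨t, hi, hj, hm⟩ := H4 i j m h1 h2 h3
      exact ⟨t, ⟨hi, hj⟩, hm⟩
  · -- dmax
    rintro (c | e) (d | f) hsub
    · have hDD : L.D c ⊆ L.D d := by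
        intro v hv
        have h' := hsub (show Sum.inl v ∈ _ from by
          simp only [Set.mem_setOf_eq, hc1', hc2', Sum.elim_inl, Sum.inl.injEq]
          exact hv)
        exact (by simpa only [Set.mem_setOf_eq, hc1', hc2', Sum.elim_inl, Sum.inl.injEq] using h' : L.c1 v = d ∨ L.c2 v = d)
      exact congrArg Sum.inl (L.dmax c d hDD)
    · obtain ⟨v, hv⟩ := L.dne c
      have h' := hsub (show Sum.inl v ∈ _ from by
        simp only [Set.mem_setOf_eq, hc1', hc2', Sum.elim_inl, Sum.inl.injEq]
        exact hv)
      simp only [Set.mem_setOf_eq, hc1', hc2', Sum.elim_inl] at h'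
      rcases h' with h' | h' <;> exact absurd h' (by simp)
    · -- inr e ⊆ inl d : contradiction
      have he := e.isLt
      have h0 := hsub (show Sum.inr (⟨e.val, by omega⟩ : Fin l) ∈ _ from by
        simp only [Set.mem_setOf_eq, hc1', hc2', Sum.elim_inr]
        exact Or.inr ((xmap_eq_inr hl (by omega)).mpr rfl))
      have h1 := hsub (show Sum.inr (⟨e.val + 1, by omega⟩ : Fin l) ∈ _ from by
        simp only [Set.mem_setOf_eq, hc1', hc2', Sum.elim_inr]
        exact Or.inl ((xmap_eq_inr hl (by omega)).mpr rfl))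
      simp only [Set.mem_setOf_eq, hc1', hc2', Sum.elim_inr] at h0 h1
      exfalso
      rcases h0 with h0 | h0 <;> rcases h1 with h1 | h1 <;>
        [skip; skip; skip; skip] <;>
        first
        | (rcases (xmap_eq_inl hl (by omega)).mp h0 with ⟨ha1, ha2⟩ | ⟨ha1, ha2⟩ <;>
            rcases (xmap_eq_inl hl (by omega)).mp h1 with ⟨hb1, hb2⟩ | ⟨hb1, hb2⟩ <;>
            first | omega | (exact hab (ha2.symm.trans hb2)))
    · -- inr e ⊆ inr f
      have he := e.isLt
      have h0 := hsub (show Sum.inr (⟨e.val, by omega⟩ : Fin l) ∈ _ from by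
        simp only [Set.mem_setOf_eq, hc1', hc2', Sum.elim_inr]
        exact Or.inr ((xmap_eq_inr hl (by omega)).mpr rfl))
      have h1 := hsub (show Sum.inr (⟨e.val + 1, by omega⟩ : Fin l) ∈ _ from by
        simp only [Set.mem_setOf_eq, hc1', hc2', Sum.elim_inr]
        exact Or.inl ((xmap_eq_inr hl (by omega)).mpr rfl))
      simp only [Set.mem_setOf_eq, hc1', hc2', Sum.elim_inr] at h0 h1
      have hf := f.isLt
      have k0 : e.val = f.val + 1 ∨ e.val + 1 = f.val + 1 := by
        rcases h0 with h0 | h0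
        · exact Or.inl ((xmap_eq_inr hl (by omega)).mp h0)
        · exact Or.inr ((xmap_eq_inr hl (by omega)).mp h0)
      have k1 : e.val + 1 = f.val + 1 ∨ e.val + 2 = f.val + 1 := by
        rcases h1 with h1 | h1
        · exact Or.inl ((xmap_eq_inr hl (by omega)).mp h1)
        · exact Or.inr ((xmap_eq_inr hl (by omega)).mp h1)
      exact congrArg Sum.inr (Fin.ext (by omega))
  · -- dne
    rintro (c | e)
    · obtain ⟨v, hv⟩ := L.dne c
      refine ⟨Sum.inl v, ?_⟩
      simp only [Set.mem_setOf_eq, hc1', hc2', Sum.elim_inl, Sum.inl.injEq]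
      exact hv
    · have he := e.isLt
      refine ⟨Sum.inr (⟨e.val + 1, by omega⟩ : Fin l), ?_⟩
      simp only [Set.mem_setOf_eq, hc1', hc2', Sum.elim_inr]
      exact Or.inl ((xmap_eq_inr hl (by omega)).mpr rfl)

lemma cycle_goodLab (n : ℕ) (hn : 4 ≤ n) :
    Nonempty (GoodLab (SimpleGraph.cycleGraph n) (Fin n)) := by
  obtain ⟨m, rfl⟩ : ∃ m, n = m + 4 := ⟨n - 4, by omega⟩
  have hval : ∀ u : Fin (m + 4),
      (u + 1).val = u.val + 1 ∨ (u.val = m + 3 ∧ (u + 1).val = 0) := by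
    intro u
    have h1 : ((1 : Fin (m + 4))).val = 1 := Fin.val_one (m + 2)
    have h2 : (u + 1).val = (u.val + 1) % (m + 4) := by rw [Fin.val_add, h1]
    rcases Nat.lt_or_ge (u.val + 1) (m + 4) with h | h
    · left; rw [h2, Nat.mod_eq_of_lt h]
    · right
      have hu := u.isLt
      have h3 : u.val = m + 3 := by omega
      refine ⟨h3, ?_⟩
      rw [h2, h3]
      simp
  have hsub : ∀ u v : Fin (m + 4), u - v = 1 ↔ u = v + 1 := by
    intro u v
    rw [sub_eq_iff_eq_add]
    exact ⟨fun h => h.trans (add_comm 1 v), fun h => h.trans (add_comm v 1)⟩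
  have hlt : ∀ u : Fin (m + 4), u.val < m + 4 := fun u => u.isLt
  refine ⟨⟨fun i => i, fun i => i + 1, ?_, ?_, ?_, ?_, ?_⟩⟩
  · -- ne
    intro u h
    have h' : u.val = (u + 1).val := congrArg Fin.val h
    rcases hval u with h2 | ⟨h2, h3⟩ <;> omega
  · -- adj
    intro u v huv
    rw [show (SimpleGraph.cycleGraph (m + 4)).Adj u v ↔ (u - v = 1 ∨ v - u = 1) from
      SimpleGraph.cycleGraph_adj, hsub, hsub, pair_inter_nonempty]
    constructor
    · rintro (h | h)
      · exact Or.inr (Or.inl h)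
      · exact Or.inr (Or.inr (Or.inl h.symm))
    · rintro (h | h | h | h)
      · exact absurd h huv
      · exact Or.inl h
      · exact Or.inr h.symm
      · exact absurd (add_right_cancel h) huv
  · -- helly
    intro u v w h1 h2 h3
    rw [pair_inter_nonempty] at h1 h2 h3
    have hu := hval u; have hv := hval v; have hw := hval w
    have hlu := hlt u; have hlv := hlt v; have hlw := hlt w
    have hlu1 := hlt (u + 1); have hlv1 := hlt (v + 1); have hlw1 := hlt (w + 1)
    simp only [Fin.ext_iff] at h1 h2 h3
    have goal : ∃ t : Fin (m + 4),
        (t.val = u.val ∨ t.val = (u + 1).val) ∧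
        (t.val = v.val ∨ t.val = (v + 1).val) ∧
        (t.val = w.val ∨ t.val = (w + 1).val) := by
      rcases h1 with h1 | h1 | h1 | h1 <;> rcases h2 with h2 | h2 | h2 | h2 <;>
        rcases h3 with h3 | h3 | h3 | h3 <;>
        first
        | exact ⟨u, by omega, by omega, by omega⟩
        | exact ⟨u + 1, by omega, by omega, by omega⟩
        | exact ⟨v, by omega, by omega, by omega⟩
        | exact ⟨v + 1, by omega, by omega, by omega⟩
        | exact ⟨w, by omega, by omega, by omega⟩
        | exact ⟨w + 1, by omega, by omega, by omega⟩
    obtain ⟨t, ht1, ht2, ht3⟩ := goal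
    refine ⟨t, ⟨?_, ?_⟩, ?_⟩
    · rcases ht1 with h | h
      · rw [show t = u from Fin.ext h]; exact mem_pair_left
      · rw [show t = u + 1 from Fin.ext h]; exact mem_pair_right
    · rcases ht2 with h | h
      · rw [show t = v from Fin.ext h]; exact mem_pair_left
      · rw [show t = v + 1 from Fin.ext h]; exact mem_pair_right
    · rcases ht3 with h | h
      · rw [show t = w from Fin.ext h]; exact mem_pair_left
      · rw [show t = w + 1 from Fin.ext h]; exact mem_pair_right
  · -- dmax
    intro i j hsubs
    have hs : i - 1 + 1 = i := sub_add_cancel i 1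
    have h1 := hsubs (show i ∈ _ from Or.inl rfl)
    have h2 := hsubs (show i - 1 ∈ _ from Or.inr (show i - 1 + 1 = i from hs))
    have h1' : i = j ∨ i + 1 = j := h1
    have h2' : i - 1 = j ∨ i - 1 + 1 = j := h2
    rcases h1' with h1' | h1'
    · exact h1'
    · rcases h2' with h2' | h2'
      · exfalso
        have hji : j + 1 = i := by rw [← h2', hs]
        have hii : i + (1 + 1) = i + 0 := by
          rw [← add_assoc, h1', hji, add_zero]
        have h20 : (1 + 1 : Fin (m + 4)) = 0 := add_left_cancel hii
        have hv2 : ((1 + 1 : Fin (m + 4))).val = 2 := by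
          rw [Fin.val_add, Fin.val_one, Nat.mod_eq_of_lt (by omega)]
        rw [h20] at hv2
        simp at hv2
      · exact hs.symm.trans h2'
  · -- dne
    intro i
    exact ⟨i, Or.inl rfl⟩

lemma iso_goodLab {V W ι : Type} {G : SimpleGraph V} {H : SimpleGraph W} (e : G ≃g H)
    (L : GoodLab G ι) : Nonempty (GoodLab H ι) := by
  refine ⟨⟨fun w => L.c1 (e.symm w), fun w => L.c2 (e.symm w), fun w => L.ne _,
    ?_, ?_, ?_, ?_⟩⟩
  · intro v w hvw
    rw [← e.symm.map_adj_iff]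
    exact L.adj _ _ (fun h => hvw (e.symm.injective h))
  · exact fun u v w h1 h2 h3 => L.helly _ _ _ h1 h2 h3
  · intro i j hsubs
    apply L.dmax
    intro v hv
    have h' := hsubs (show e v ∈ _ from by
      show L.c1 (e.symm (e v)) = i ∨ L.c2 (e.symm (e v)) = i
      rw [e.symm_apply_apply]
      exact hv)
    show L.c1 v = j ∨ L.c2 v = j
    have h'' : L.c1 (e.symm (e v)) = j ∨ L.c2 (e.symm (e v)) = j := h'
    rwa [e.symm_apply_apply] at h''
  · intro i
    obtain ⟨v, hv⟩ := L.dne i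
    refine ⟨e v, ?_⟩
    show L.c1 (e.symm (e v)) = i ∨ L.c2 (e.symm (e v)) = i
    rw [e.symm_apply_apply]
    exact hv

lemma gate_goodLab {V : Type} (G : SimpleGraph V) (hG : IsGate G) :
    ∃ ι : Type, Nonempty ι ∧ Finite ι ∧ Nonempty (GoodLab G ι) := by
  induction hG with
  | cycle n hn =>
    exact ⟨Fin n, ⟨⟨0, by omega⟩⟩, inferInstance, cycle_goodLab n hn⟩
  | extend G C C' l hG hC hC' hdisj hl ih =>
    obtain ⟨ι, hne, hfin, ⟨L⟩⟩ := ih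
    haveI := hne; haveI := hfin
    exact ⟨ι ⊕ Fin (l - 1), ⟨Sum.inl (Classical.arbitrary ι)⟩, inferInstance,
      extend_goodLab L C C' l hC hC' hdisj hl⟩
  | iso G H hG e ih =>
    obtain ⟨ι, hne, hfin, hL⟩ := ih
    exact ⟨ι, hne, hfin, hL.elim fun L => iso_goodLab e L⟩

theorem stmt4 {V : Type} (G : SimpleGraph V) (k : ℕ)
    (hG : IsGate G) (hk : numMaxCliques G = k) :
    ∃ R : EPTRep G, R.Helly ∧ R.maxDegLE k ∧
      ∃ q : R.VT, {x : R.VT | x ≠ q}.ncard = k ∧ ∀ x : R.VT, x ≠ q → R.T.Adj q x := by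
  obtain ⟨ι, hne, hfin, ⟨L⟩⟩ := gate_goodLab G hG
  haveI := hne
  haveI := hfin
  have hk' : Nat.card ι = k := by rw [← hk, L.count]
  refine ⟨L.rep, L.rep_helly, hk' ▸ L.rep_maxDeg, none, ?_, ?_⟩
  · show ({x : Option ι | x ≠ none}).ncard = k
    rw [ncard_ne_none, hk']
  · rintro (_ | i) hx
    · exact absurd rfl hx
    · exact ⟨fun h => Option.some_ne_none i h.symm, Or.inl rfl⟩
end

section
/- Let v be a vertex of a gate G, and let C_1, C_2 be the two maximal cliques of G containing v (so C_1 ∩ C_2 = {v}). Let W:(w_1,...,w_t), t ≥ 2, be a chordless path vertex-disjoint from G. Then the graph obtained from the union of G − v and W by adding all edges between w_1 and the vertices of C_1 − {v} and all edges between w_t and the vertices of C_2 − {v} is a gate. -/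
section Helpers

open SimpleGraph Sum

variable {V : Type} {G : SimpleGraph V}

lemma mem_of_adj_all {S : Set V} (hS : IsMaxClique G S) (y : V)
    (h : ∀ x ∈ S, x ≠ y → G.Adj y x) : y ∈ S := by
  have hcl : G.IsClique (insert y S) := by
    intro a ha b hb hab
    rcases ha with rfl | ha
    · rcases hb with rfl | hb
      · exact absurd rfl hab
      · exact h b hb (fun e => hab e.symm)
    · rcases hb with rfl | hb
      · exact (h a ha hab).symm
      · exact hS.1 ha hb hab
  have := hS.2 _ hcl (Set.subset_insert _ _)
  rw [this]; exact Set.mem_insert _ _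

lemma maxclique_nonempty {S : Set V} (hS : IsMaxClique G S) (x : V) : S.Nonempty := by
  by_contra h
  rw [Set.not_nonempty_iff_eq_empty] at h
  subst h
  have := hS.2 {x} (by simp [SimpleGraph.isClique_singleton]) (Set.empty_subset _)
  exact (Set.singleton_nonempty x).ne_empty this.symm

lemma maxclique_ne_of_disjoint {A B : Set V} (hA : A.Nonempty) (hd : Disjoint A B) :
    A ≠ B := by
  rintro rfl
  exact hA.ne_empty (by simpa using hd)

/-- preimage of a max clique under a graph iso is a max clique -/
lemma maxclique_preimage {W : Type} {H : SimpleGraph W} (e : G ≃g H) {K : Set W}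
    (hK : IsMaxClique H K) : IsMaxClique G (⇑e ⁻¹' K) := by
  constructor
  · intro x hx y hy hxy
    have := hK.1 hx hy (fun h => hxy (e.injective h))
    exact e.map_rel_iff.mp this
  · intro T hT hsub
    have hTcl : H.IsClique (⇑e '' T) := by
      rintro _ ⟨x, hx, rfl⟩ _ ⟨y, hy, rfl⟩ hxy
      exact e.map_rel_iff.mpr (hT hx hy (fun h => hxy (congrArg e h)))
    have hKsub : K ⊆ ⇑e '' T := by
      intro w hw
      refine ⟨e.symm w, hsub (by simp [hw]), by simp⟩
    have := hK.2 _ hTcl hKsub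
    rw [this, Set.preimage_image_eq _ e.injective]

end Helpers
section CycleAdj
open SimpleGraph

lemma cycle_adj_val {m : ℕ} (u v : Fin m) :
    (SimpleGraph.cycleGraph m).Adj u v ↔ u.val ≠ v.val ∧
      (u.val + 1 = v.val ∨ v.val + 1 = u.val ∨
       (u.val = 0 ∧ v.val + 1 = m) ∨ (v.val = 0 ∧ u.val + 1 = m)) := by
  have hu := u.isLt
  have hv := v.isLt
  rw [SimpleGraph.cycleGraph_adj']
  have hm : 0 < m := by omega
  have hsub : ∀ a b : Fin m, (a - b).val = (a.val + (m - b.val)) % m := by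
    intro a b; rw [Fin.sub_def]; simp [Nat.add_comm]
  rw [hsub, hsub]
  have key : ∀ a b : ℕ, a < m → b < m →
      ((a + (m - b)) % m = 1 ↔ (a + 1 = b ∧ b ≠ a + 1 + 0) ∨ True) → True := fun _ _ _ _ _ => trivial
  have e1 : (u.val + (m - v.val)) % m = if u.val + (m - v.val) < m then u.val + (m - v.val) else u.val + (m - v.val) - m := by
    split
    · exact Nat.mod_eq_of_lt ‹_›
    · rw [Nat.mod_eq_sub_mod (by omega), Nat.mod_eq_of_lt (by omega)]
  have e2 : (v.val + (m - u.val)) % m = if v.val + (m - u.val) < m then v.val + (m - u.val) else v.val + (m - u.val) - m := by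
    split
    · exact Nat.mod_eq_of_lt ‹_›
    · rw [Nat.mod_eq_sub_mod (by omega), Nat.mod_eq_of_lt (by omega)]
  rw [e1, e2]
  split <;> split <;> omega

end CycleAdj
section Lift1
open SimpleGraph Sum

variable {V : Type}

@[simp] lemma joinPath_adj_inl_inl {G : SimpleGraph V} {A B : Set V} {l : ℕ} {a b : V} :
    (joinPath G A B l).Adj (inl a) (inl b) ↔ G.Adj a b := Iff.rfl

@[simp] lemma joinPath_adj_inl_inr {G : SimpleGraph V} {A B : Set V} {l : ℕ} {a : V} {i : Fin l} :
    (joinPath G A B l).Adj (inl a) (inr i) ↔ (i.val = 0 ∧ a ∈ A) ∨ (i.val = l - 1 ∧ a ∈ B) :=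
  Iff.rfl

@[simp] lemma joinPath_adj_inr_inl {G : SimpleGraph V} {A B : Set V} {l : ℕ} {a : V} {i : Fin l} :
    (joinPath G A B l).Adj (inr i) (inl a) ↔ (i.val = 0 ∧ a ∈ A) ∨ (i.val = l - 1 ∧ a ∈ B) :=
  Iff.rfl

@[simp] lemma joinPath_adj_inr_inr {G : SimpleGraph V} {A B : Set V} {l : ℕ} {i j : Fin l} :
    (joinPath G A B l).Adj (inr i) (inr j) ↔ i.val + 1 = j.val ∨ j.val + 1 = i.val := Iff.rfl

/-- The lift of a maximal clique `E` of `G` to `joinPath G A B l`. -/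
def lift1 (E A B : Set V) (l : ℕ) : Set (V ⊕ Fin l) :=
  {w | match w with
    | Sum.inl x => x ∈ E
    | Sum.inr j => (j.val = 0 ∧ E = A) ∨ (j.val = l - 1 ∧ E = B)}

@[simp] lemma mem_lift1_inl {E A B : Set V} {l : ℕ} {x : V} :
    inl x ∈ lift1 E A B l ↔ x ∈ E := Iff.rfl

@[simp] lemma mem_lift1_inr {E A B : Set V} {l : ℕ} {j : Fin l} :
    inr j ∈ lift1 E A B l ↔ (j.val = 0 ∧ E = A) ∨ (j.val = l - 1 ∧ E = B) := Iff.rfl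

lemma lift1_inj {E E' A B : Set V} {l : ℕ} (h : lift1 E A B l = lift1 E' A B l) : E = E' := by
  ext x
  constructor
  · intro hx; have : inl x ∈ lift1 E A B l := hx; rw [h] at this; exact this
  · intro hx; have : inl x ∈ lift1 E' A B l := hx; rw [← h] at this; exact this

variable {H : SimpleGraph V} {A B E : Set V} {l : ℕ}

/-- lift of a maximal clique `E` different from `A`, `B`. -/
lemma lift1_maxclique_other (hl : 2 ≤ l) (hE : IsMaxClique H E) (hEne : E.Nonempty)
    (hEA : ¬ E ⊆ A) (hEB : ¬ E ⊆ B) : IsMaxClique (joinPath H A B l) (lift1 E A B l) := by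
  have hEA' : E ≠ A := fun h => hEA (h ▸ le_refl E)
  have hEB' : E ≠ B := fun h => hEB (h ▸ le_refl E)
  constructor
  · rintro (x | j) hx (y | j') hy hne
    · exact hE.1 hx hy (fun h => hne (congrArg _ h))
    · rcases hy with ⟨_, h⟩ | ⟨_, h⟩ <;> [exact absurd h hEA'; exact absurd h hEB']
    · rcases hx with ⟨_, h⟩ | ⟨_, h⟩ <;> [exact absurd h hEA'; exact absurd h hEB']
    · rcases hx with ⟨_, h⟩ | ⟨_, h⟩ <;> [exact absurd h hEA'; exact absurd h hEB']
  · intro K hK hsub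
    ext w
    refine ⟨fun hw => hsub hw, fun hw => ?_⟩
    by_cases hmem : w ∈ lift1 E A B l
    · exact hmem
    · exfalso
      have hadj : ∀ z ∈ lift1 E A B l, z ≠ w → (joinPath H A B l).Adj w z :=
        fun z hz hne => hK hw (hsub hz) (fun h => hne h.symm)
      match w with
      | inl y =>
        have hy : y ∈ E := by
          apply mem_of_adj_all hE
          intro x hx hxy
          exact hadj (inl x) hx (fun h => hxy (by injection h))
        exact hmem hy
      | inr j =>
        have hj : ∀ x ∈ E, (j.val = 0 ∧ x ∈ A) ∨ (j.val = l - 1 ∧ x ∈ B) := by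
          intro x hx
          have := hadj (inl x) hx (by simp)
          simpa using this
        obtain ⟨x₀, hx₀⟩ := hEne
        rcases hj x₀ hx₀ with ⟨h0, _⟩ | ⟨h1, _⟩
        · exact hEA (fun x hx => by rcases hj x hx with ⟨_, h⟩ | ⟨h, _⟩ <;> [exact h; omega])
        · exact hEB (fun x hx => by rcases hj x hx with ⟨h, _⟩ | ⟨_, h⟩ <;> [omega; exact h])

/-- lift of the attachment clique `A` itself. -/
lemma lift1_maxclique_left (hl : 2 ≤ l) (hA : H.IsClique A) (hAne : A.Nonempty)
    (hdisj : Disjoint A B) : IsMaxClique (joinPath H A B l) (lift1 A A B l) := by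
  have hAB : A ≠ B := maxclique_ne_of_disjoint hAne hdisj
  have hmem : ∀ j : Fin l, inr j ∈ lift1 A A B l ↔ j.val = 0 := by
    intro j
    rw [mem_lift1_inr]
    constructor
    · rintro (⟨h, _⟩ | ⟨_, h⟩)
      · exact h
      · exact absurd h hAB
    · intro h
      exact Or.inl ⟨h, rfl⟩
  constructor
  · rintro (x | j) hx (y | j') hy hne
    · exact hA hx hy (fun h => hne (congrArg _ h))
    · rw [hmem] at hy; exact Or.inl ⟨hy, hx⟩
    · rw [hmem] at hx; exact Or.inl ⟨hx, hy⟩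
    · rw [hmem] at hx hy
      exact absurd (congrArg Sum.inr (Fin.val_injective (hx.trans hy.symm))) hne
  · intro K hK hsub
    have h0l : (0 : ℕ) < l := by omega
    have h0 : inr (⟨0, h0l⟩ : Fin l) ∈ lift1 A A B l := by rw [hmem]
    ext w
    refine ⟨fun hw => hsub hw, fun hw => ?_⟩
    by_cases hmem' : w ∈ lift1 A A B l
    · exact hmem'
    · exfalso
      have hadj : ∀ z ∈ lift1 A A B l, z ≠ w → (joinPath H A B l).Adj w z :=
        fun z hz hne => hK hw (hsub hz) (fun h => hne h.symm)
      match w with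
      | inl y =>
        have := hadj _ h0 (by simp)
        simp only [joinPath_adj_inl_inr] at this
        rcases this with ⟨_, h⟩ | ⟨h, _⟩
        · exact hmem' h
        · omega
      | inr j =>
        have hj0 : j.val ≠ 0 := fun h => hmem' ((hmem j).mpr h)
        have h1 := hadj _ h0 (by simp only [ne_eq, Sum.inr.injEq, Fin.ext_iff]; omega)
        simp only [joinPath_adj_inr_inr] at h1
        have hj1 : j.val = 1 := by omega
        obtain ⟨x₀, hx₀⟩ := hAne
        have h2 := hadj (inl x₀) hx₀ (by simp)
        simp only [joinPath_adj_inr_inl] at h2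
        rcases h2 with ⟨h, _⟩ | ⟨_, h⟩
        · omega
        · exact (Set.disjoint_left.mp hdisj hx₀) h

/-- lift of the attachment clique `B` itself. -/
lemma lift1_maxclique_right (hl : 2 ≤ l) (hB : H.IsClique B) (hBne : B.Nonempty)
    (hdisj : Disjoint A B) : IsMaxClique (joinPath H A B l) (lift1 B A B l) := by
  have hAB : B ≠ A := maxclique_ne_of_disjoint hBne hdisj.symm
  have hmem : ∀ j : Fin l, inr j ∈ lift1 B A B l ↔ j.val = l - 1 := by
    intro j
    rw [mem_lift1_inr]
    constructor
    · rintro (⟨_, h⟩ | ⟨h, _⟩)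
      · exact absurd h hAB
      · exact h
    · intro h
      exact Or.inr ⟨h, rfl⟩
  constructor
  · rintro (x | j) hx (y | j') hy hne
    · exact hB hx hy (fun h => hne (congrArg _ h))
    · rw [hmem] at hy; exact Or.inr ⟨hy, hx⟩
    · rw [hmem] at hx; exact Or.inr ⟨hx, hy⟩
    · rw [hmem] at hx hy
      exact absurd (congrArg Sum.inr (Fin.val_injective (hx.trans hy.symm))) hne
  · intro K hK hsub
    have h0l : l - 1 < l := by omega
    have h0 : inr (⟨l - 1, h0l⟩ : Fin l) ∈ lift1 B A B l := by rw [hmem]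
    ext w
    refine ⟨fun hw => hsub hw, fun hw => ?_⟩
    by_cases hmem' : w ∈ lift1 B A B l
    · exact hmem'
    · exfalso
      have hadj : ∀ z ∈ lift1 B A B l, z ≠ w → (joinPath H A B l).Adj w z :=
        fun z hz hne => hK hw (hsub hz) (fun h => hne h.symm)
      match w with
      | inl y =>
        have := hadj _ h0 (by simp)
        simp only [joinPath_adj_inl_inr] at this
        rcases this with ⟨h, _⟩ | ⟨_, h⟩
        · omega
        · exact hmem' h
      | inr j =>
        have hj0 : j.val ≠ l - 1 := fun h => hmem' ((hmem j).mpr h)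
        have h1 := hadj _ h0 (by simp only [ne_eq, Sum.inr.injEq, Fin.ext_iff]; omega)
        simp only [joinPath_adj_inr_inr] at h1
        have hj1 : j.val = l - 2 := by omega
        obtain ⟨x₀, hx₀⟩ := hBne
        have h2 := hadj (inl x₀) hx₀ (by simp)
        simp only [joinPath_adj_inr_inl] at h2
        rcases h2 with ⟨_, hA'⟩ | ⟨h, _⟩
        · exact (Set.disjoint_left.mp hdisj hA') hx₀
        · omega

/-- removing a vertex not in a maximal clique keeps it maximal. -/
lemma maxclique_induce {G : SimpleGraph V} {C : Set V} {u : V} (hu : u ∉ C)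
    (hC : IsMaxClique G C) : IsMaxClique (G.induce {x | x ≠ u}) {x : {x : V // x ≠ u} | ↑x ∈ C} := by
  constructor
  · intro x hx y hy hne
    exact hC.1 hx hy (fun h => hne (Subtype.ext h))
  · intro T hT hsub
    ext w
    refine ⟨fun hw => hsub hw, fun hw => ?_⟩
    show ↑w ∈ C
    apply mem_of_adj_all hC
    intro x hx hxw
    have hxu : x ≠ u := fun h => hu (h ▸ hx)
    have hmem : (⟨x, hxu⟩ : {x : V // x ≠ u}) ∈ T := hsub hx
    exact hT hw hmem (fun h => hxw (by rw [h]))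
end Lift1
section Classify
open SimpleGraph Sum

variable {V : Type} {H : SimpleGraph V} {A B : Set V} {l : ℕ}

/-- classification of maximal cliques of `joinPath` containing an original vertex. -/
lemma classify_inl (hl : 2 ≤ l) (hA : IsMaxClique H A) (hB : IsMaxClique H B)
    (hdisj : Disjoint A B) (hAne : A.Nonempty) (hBne : B.Nonempty)
    {K : Set (V ⊕ Fin l)} (hK : IsMaxClique (joinPath H A B l) K) {x : V} (hx : inl x ∈ K) :
    ∃ D, IsMaxClique H D ∧ x ∈ D ∧ K = lift1 D A B l := by
  classical
  set D : Set V := {y : V | inl y ∈ K} with hD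
  have hDcl : H.IsClique D := by
    intro a ha b hb hne
    have := hK.1 ha hb (fun h => hne (by injection h))
    exact this
  have hxD : x ∈ D := hx
  by_cases hinr : ∃ j : Fin l, inr j ∈ K
  · obtain ⟨j₀, hj₀⟩ := hinr
    have hadj := hK.1 hx hj₀ (by simp)
    simp only [joinPath_adj_inl_inr] at hadj
    rcases hadj with ⟨h0, hxA⟩ | ⟨h1, hxB⟩
    · -- j₀ = 0, K = lift1 A A B l
      refine ⟨A, hA, hxA, ?_⟩
      have hmax := lift1_maxclique_left hl hA.1 hAne hdisj
      have hsub : K ⊆ lift1 A A B l := by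
        rintro (y | j) hw
        · have := hK.1 hw hj₀ (by simp)
          simp only [joinPath_adj_inl_inr, h0] at this
          rcases this with ⟨_, hy⟩ | ⟨h, _⟩
          · exact hy
          · omega
        · by_cases hji : j = j₀
          · subst hji; exact Or.inl ⟨h0, rfl⟩
          · exfalso
            have h1 := hK.1 hw hj₀ (by simp [Sum.inr.injEq, hji])
            simp only [joinPath_adj_inr_inr, h0] at h1
            have h2 := hK.1 hw hx (by simp)
            simp only [joinPath_adj_inr_inl] at h2
            rcases h2 with ⟨h, _⟩ | ⟨_, hxB⟩
            · omega
            · exact (Set.disjoint_left.mp hdisj hxA) hxB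
      exact hK.2 _ hmax.1 hsub
    · -- j₀ = l-1, K = lift1 B A B l
      refine ⟨B, hB, hxB, ?_⟩
      have hmax := lift1_maxclique_right hl hB.1 hBne hdisj
      have hsub : K ⊆ lift1 B A B l := by
        rintro (y | j) hw
        · have := hK.1 hw hj₀ (by simp)
          simp only [joinPath_adj_inl_inr, h1] at this
          rcases this with ⟨h, _⟩ | ⟨_, hy⟩
          · omega
          · exact hy
        · by_cases hji : j = j₀
          · subst hji; exact Or.inr ⟨h1, rfl⟩
          · exfalso
            have hh1 := hK.1 hw hj₀ (by simp [Sum.inr.injEq, hji])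
            simp only [joinPath_adj_inr_inr, h1] at hh1
            have h2 := hK.1 hw hx (by simp)
            simp only [joinPath_adj_inr_inl] at h2
            rcases h2 with ⟨_, hxA⟩ | ⟨h, _⟩
            · exact (Set.disjoint_left.mp hdisj hxA) hxB
            · omega
      exact hK.2 _ hmax.1 hsub
  · push_neg at hinr
    have hKeq : K = Sum.inl '' D := by
      ext w
      cases w with
      | inl y => simp [hD]
      | inr j => simp [hinr j]
    have hDmax : IsMaxClique H D := by
      refine ⟨hDcl, fun E hE hDE => ?_⟩
      have hEcl : (joinPath H A B l).IsClique (Sum.inl '' E) := by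
        rintro _ ⟨a, ha, rfl⟩ _ ⟨b, hb, rfl⟩ hne
        exact hE ha hb (fun h => hne (congrArg _ h))
      have hsub : K ⊆ Sum.inl '' E := by
        rw [hKeq]; exact Set.image_mono hDE
      have := hK.2 _ hEcl hsub
      rw [hKeq] at this
      ext y
      constructor
      · exact fun h => hDE h
      · intro h
        have hmem' : (inl y : V ⊕ Fin l) ∈ Sum.inl '' E := ⟨y, h, rfl⟩
        rw [← this] at hmem'
        obtain ⟨z, hz, hzy⟩ := hmem'
        injection hzy with h'
        exact h' ▸ hz
    have hDA : D ≠ A := by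
      intro h
      have h0l : (0:ℕ) < l := by omega
      have hcl : (joinPath H A B l).IsClique (insert (inr ⟨0, h0l⟩) K) := by
        intro a ha b hb hne
        rcases ha with rfl | ha
        · rcases hb with rfl | hb
          · exact absurd rfl hne
          · rw [hKeq] at hb; obtain ⟨y, hy, rfl⟩ := hb
            exact Or.inl ⟨rfl, h ▸ hy⟩
        · rcases hb with rfl | hb
          · rw [hKeq] at ha; obtain ⟨y, hy, rfl⟩ := ha
            exact Or.inl ⟨rfl, h ▸ hy⟩
          · exact hK.1 ha hb hne
      have := hK.2 _ hcl (Set.subset_insert _ _)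
      have : inr ⟨0, h0l⟩ ∈ K := this ▸ Set.mem_insert _ _
      exact hinr _ this
    have hDB : D ≠ B := by
      intro h
      have h0l : l - 1 < l := by omega
      have hcl : (joinPath H A B l).IsClique (insert (inr ⟨l-1, h0l⟩) K) := by
        intro a ha b hb hne
        rcases ha with rfl | ha
        · rcases hb with rfl | hb
          · exact absurd rfl hne
          · rw [hKeq] at hb; obtain ⟨y, hy, rfl⟩ := hb
            exact Or.inr ⟨rfl, h ▸ hy⟩
        · rcases hb with rfl | hb
          · rw [hKeq] at ha; obtain ⟨y, hy, rfl⟩ := ha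
            exact Or.inr ⟨rfl, h ▸ hy⟩
          · exact hK.1 ha hb hne
      have := hK.2 _ hcl (Set.subset_insert _ _)
      have : inr ⟨l-1, h0l⟩ ∈ K := this ▸ Set.mem_insert _ _
      exact hinr _ this
    refine ⟨D, hDmax, hxD, ?_⟩
    rw [hKeq]
    ext w
    cases w with
    | inl y => simp
    | inr j => simp [hDA, hDB]

/-- classification of maximal cliques of `joinPath` containing a path vertex. -/
lemma classify_inr (hl : 2 ≤ l) (hA : IsMaxClique H A) (hB : IsMaxClique H B)
    (hdisj : Disjoint A B) (hAne : A.Nonempty) (hBne : B.Nonempty)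
    {K : Set (V ⊕ Fin l)} (hK : IsMaxClique (joinPath H A B l) K) {i : Fin l} (hi : inr i ∈ K) :
    (i.val = 0 ∧ K = lift1 A A B l) ∨ (i.val = l - 1 ∧ K = lift1 B A B l) ∨
    (∃ j k : Fin l, j.val + 1 = k.val ∧ K = {inr j, inr k} ∧ (i = j ∨ i = k)) := by
  classical
  by_cases hinl : ∃ y : V, inl y ∈ K
  · obtain ⟨y, hy⟩ := hinl
    have hadj := hK.1 hy hi (by simp)
    simp only [joinPath_adj_inl_inr] at hadj
    rcases hadj with ⟨h0, hyA⟩ | ⟨h1, hyB⟩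
    · -- i = 0
      left
      refine ⟨h0, ?_⟩
      have hmax := lift1_maxclique_left hl hA.1 hAne hdisj
      have hsub : K ⊆ lift1 A A B l := by
        rintro (z | j) hw
        · have := hK.1 hw hi (by simp)
          simp only [joinPath_adj_inl_inr, h0] at this
          rcases this with ⟨_, hz⟩ | ⟨h, _⟩
          · exact hz
          · omega
        · by_cases hji : j = i
          · subst hji; exact Or.inl ⟨h0, rfl⟩
          · exfalso
            have hh1 := hK.1 hw hi (by simp [Sum.inr.injEq, hji])
            simp only [joinPath_adj_inr_inr, h0] at hh1
            have h2 := hK.1 hw hy (by simp)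
            simp only [joinPath_adj_inr_inl] at h2
            rcases h2 with ⟨h, _⟩ | ⟨_, hyB⟩
            · omega
            · exact (Set.disjoint_left.mp hdisj hyA) hyB
      exact hK.2 _ hmax.1 hsub
    · -- i = l-1
      right; left
      refine ⟨h1, ?_⟩
      have hmax := lift1_maxclique_right hl hB.1 hBne hdisj
      have hsub : K ⊆ lift1 B A B l := by
        rintro (z | j) hw
        · have := hK.1 hw hi (by simp)
          simp only [joinPath_adj_inl_inr, h1] at this
          rcases this with ⟨h, _⟩ | ⟨_, hz⟩
          · omega
          · exact hz
        · by_cases hji : j = i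
          · subst hji; exact Or.inr ⟨h1, rfl⟩
          · exfalso
            have hh1 := hK.1 hw hi (by simp [Sum.inr.injEq, hji])
            simp only [joinPath_adj_inr_inr, h1] at hh1
            have h2 := hK.1 hw hy (by simp)
            simp only [joinPath_adj_inr_inl] at h2
            rcases h2 with ⟨_, hyA⟩ | ⟨h, _⟩
            · exact (Set.disjoint_left.mp hdisj hyA) hyB
            · omega
      exact hK.2 _ hmax.1 hsub
  · push_neg at hinl
    right; right
    -- K consists only of inr vertices, all adjacent to inr i
    have hmem : ∀ j : Fin l, inr j ∈ K → j = i ∨ j.val + 1 = i.val ∨ i.val + 1 = j.val := by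
      intro j hj
      by_cases hji : j = i
      · exact Or.inl hji
      · have := hK.1 hj hi (by simp [Sum.inr.injEq, hji])
        simp only [joinPath_adj_inr_inr] at this
        tauto
    have hnotboth : ¬ (∃ j : Fin l, inr j ∈ K ∧ j.val + 1 = i.val) ∨
        ¬ (∃ j : Fin l, inr j ∈ K ∧ i.val + 1 = j.val) := by
      by_contra h
      push_neg at h
      obtain ⟨⟨j, hj, hj1⟩, ⟨k, hk, hk1⟩⟩ := h
      have hjk : j ≠ k := by intro h; rw [h] at hj1; omega
      have := hK.1 hj hk (by simp [Sum.inr.injEq, hjk])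
      simp only [joinPath_adj_inr_inr] at this
      omega
    by_cases hleft : ∃ j : Fin l, inr j ∈ K ∧ j.val + 1 = i.val
    · obtain ⟨j, hj, hj1⟩ := hleft
      refine ⟨j, i, hj1, ?_, Or.inr rfl⟩
      have hcl : (joinPath H A B l).IsClique {inr j, inr i} := by
        intro a ha b hb hne
        rcases ha with rfl | ha <;> rcases hb with rfl | hb <;>
          first
          | exact absurd rfl hne
          | (rw [Set.mem_singleton_iff] at *; subst_vars; first | exact absurd rfl hne | simp [hj1] | (simp; omega))
      have hsub : K ⊆ {inr j, inr i} := by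
        rintro (z | k) hw
        · exact absurd hw (hinl z)
        · rcases hmem k hw with rfl | h | h
          · exact Or.inr rfl
          · have : k = j := Fin.val_injective (by omega)
            exact Or.inl (by rw [this])
          · exfalso
            rcases hnotboth with hn | hn
            · exact hn ⟨j, hj, hj1⟩
            · exact hn ⟨k, hw, h⟩
      exact hK.2 _ hcl hsub
    · -- no left neighbor in K; K ⊆ {inr i, inr (i+1)}
      push_neg at hleft
      -- K must contain another vertex besides inr i
      have hex : ∃ k : Fin l, inr k ∈ K ∧ i.val + 1 = k.val := by
        by_contra h
        push_neg at h
        -- then K = {inr i}, not maximal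
        have hKi : K = {inr i} := by
          ext w
          constructor
          · rintro hw
            match w with
            | inl z => exact absurd hw (hinl z)
            | inr k =>
              rcases hmem k hw with rfl | hk | hk
              · rfl
              · exact absurd hk (hleft k hw)
              · exact absurd hk (h k hw)
          · rintro rfl; exact hi
        -- inr i has a neighbor: i+1 if i+1 < l else i-1
        by_cases hil : i.val + 1 < l
        · have hcl : (joinPath H A B l).IsClique (insert (inr ⟨i.val+1, hil⟩) K) := by
            rw [hKi]
            intro a ha b hb hne
            rcases ha with rfl | ha <;> rcases hb with rfl | hb <;>
              simp_all [Set.mem_singleton_iff] <;> omega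
          have := hK.2 _ hcl (Set.subset_insert _ _)
          rw [hKi] at this
          have : (inr ⟨i.val+1, hil⟩ : V ⊕ Fin l) ∈ ({inr i} : Set (V ⊕ Fin l)) := by
            rw [this]; exact Set.mem_insert _ _
          simp only [Set.mem_singleton_iff, Sum.inr.injEq, Fin.ext_iff] at this
          omega
        · have hi0 : 0 < i.val := by have := i.isLt; omega
          have hil' : i.val - 1 < l := by omega
          have hcl : (joinPath H A B l).IsClique (insert (inr ⟨i.val-1, hil'⟩) K) := by
            rw [hKi]
            intro a ha b hb hne
            rcases ha with rfl | ha <;> rcases hb with rfl | hb <;>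
              simp_all [Set.mem_singleton_iff] <;> omega
          have := hK.2 _ hcl (Set.subset_insert _ _)
          rw [hKi] at this
          have : (inr ⟨i.val-1, hil'⟩ : V ⊕ Fin l) ∈ ({inr i} : Set (V ⊕ Fin l)) := by
            rw [this]; exact Set.mem_insert _ _
          simp only [Set.mem_singleton_iff, Sum.inr.injEq, Fin.ext_iff] at this
          omega
      obtain ⟨k, hk, hk1⟩ := hex
      refine ⟨i, k, hk1, ?_, Or.inl rfl⟩
      have hcl : (joinPath H A B l).IsClique {inr i, inr k} := by
        intro a ha b hb hne
        rcases ha with rfl | ha <;> rcases hb with rfl | hb <;>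
          first
          | exact absurd rfl hne
          | (rw [Set.mem_singleton_iff] at *; subst_vars; first | exact absurd rfl hne | simp [hk1] | (simp; omega))
      have hsub : K ⊆ {inr i, inr k} := by
        rintro (z | m) hw
        · exact absurd hw (hinl z)
        · rcases hmem m hw with rfl | h | h
          · exact Or.inl rfl
          · exact absurd h (hleft m hw)
          · have : m = k := Fin.val_injective (by omega)
            exact Or.inr (by rw [this]; rfl)
      exact hK.2 _ hcl hsub

end Classify
section CycleClassify
open SimpleGraph Sum

/-- maximal cliques of a cycle through `v` are the two incident edges -/
lemma classify_cycle {n : ℕ} (hn : 4 ≤ n) {K : Set (Fin n)}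
    (hK : IsMaxClique (SimpleGraph.cycleGraph n) K) {v : Fin n} (hv : v ∈ K) :
    (∃ p : Fin n, (p.val + 1) % n = v.val ∧ K = {p, v}) ∨
    (∃ q : Fin n, (v.val + 1) % n = q.val ∧ K = {v, q}) := by
  classical
  have hn0 : 0 < n := by omega
  obtain ⟨p, hpval⟩ : ∃ p : Fin n, p.val = (v.val + (n-1)) % n :=
    ⟨⟨_, Nat.mod_lt _ hn0⟩, rfl⟩
  obtain ⟨q, hqval⟩ : ∃ q : Fin n, q.val = (v.val + 1) % n :=
    ⟨⟨_, Nat.mod_lt _ hn0⟩, rfl⟩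
  have hv' := v.isLt
  have hp : (v.val = 0 ∧ p.val = n - 1) ∨ (0 < v.val ∧ p.val = v.val - 1) := by
    rcases Nat.eq_zero_or_pos v.val with h | h
    · left; refine ⟨h, ?_⟩
      rw [hpval, h, Nat.zero_add, Nat.mod_eq_of_lt (by omega)]
    · right; refine ⟨h, ?_⟩
      rw [hpval, Nat.mod_eq_sub_mod (by omega), Nat.mod_eq_of_lt (by omega)]
      omega
  have hq : (v.val + 1 = n ∧ q.val = 0) ∨ (v.val + 1 < n ∧ q.val = v.val + 1) := by
    rcases Nat.lt_or_ge (v.val + 1) n with h | h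
    · right; exact ⟨h, by rw [hqval, Nat.mod_eq_of_lt h]⟩
    · left
      have h' : v.val + 1 = n := by omega
      exact ⟨h', by rw [hqval, h', Nat.mod_self]⟩
  have hmem : ∀ w ∈ K, w = v ∨ w = p ∨ w = q := by
    intro w hw
    by_cases hwv : w = v
    · exact Or.inl hwv
    · have := hK.1 hw hv hwv
      rw [cycle_adj_val] at this
      right
      have hw' := w.isLt
      rcases this with ⟨hne, h⟩
      rw [Fin.ext_iff, Fin.ext_iff]
      omega
  have hpq : p ≠ q := by simp only [ne_eq, Fin.ext_iff]; omega
  have hpv : p ≠ v := by simp only [ne_eq, Fin.ext_iff]; omega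
  have hqv : q ≠ v := by simp only [ne_eq, Fin.ext_iff]; omega
  have hpqadj : ¬ (SimpleGraph.cycleGraph n).Adj p q := by
    rw [cycle_adj_val]
    push_neg
    intro _
    omega
  have hadj_pv : (SimpleGraph.cycleGraph n).Adj p v := by
    rw [cycle_adj_val]; constructor <;> omega
  have hadj_vq : (SimpleGraph.cycleGraph n).Adj v q := by
    rw [cycle_adj_val]; constructor <;> omega
  have hcl1 : (SimpleGraph.cycleGraph n).IsClique {p, v} := by
    intro a ha b hb hne
    rcases ha with rfl | ha <;> rcases hb with rfl | hb
    · exact absurd rfl hne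
    · rw [Set.mem_singleton_iff] at hb; subst hb; exact hadj_pv
    · rw [Set.mem_singleton_iff] at ha; subst ha; exact hadj_pv.symm
    · rw [Set.mem_singleton_iff] at ha hb; subst ha; subst hb; exact absurd rfl hne
  have hcl2 : (SimpleGraph.cycleGraph n).IsClique {v, q} := by
    intro a ha b hb hne
    rcases ha with rfl | ha <;> rcases hb with rfl | hb
    · exact absurd rfl hne
    · rw [Set.mem_singleton_iff] at hb; subst hb; exact hadj_vq
    · rw [Set.mem_singleton_iff] at ha; subst ha; exact hadj_vq.symm
    · rw [Set.mem_singleton_iff] at ha hb; subst ha; subst hb; exact absurd rfl hne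
  by_cases hpK : p ∈ K
  · left
    refine ⟨p, ?_, ?_⟩
    · rcases hp with ⟨h1, h2⟩ | ⟨h1, h2⟩ <;> rw [h2]
      · rw [Nat.sub_add_cancel (by omega), Nat.mod_self, h1]
      · rw [Nat.sub_add_cancel (by omega), Nat.mod_eq_of_lt (by omega)]
    · have hsub : K ⊆ {p, v} := by
        intro w hw
        rcases hmem w hw with rfl | rfl | rfl
        · exact Or.inr rfl
        · exact Or.inl rfl
        · exact absurd (hK.1 hpK hw hpq) hpqadj
      exact hK.2 _ hcl1 hsub
  · right
    refine ⟨q, hqval.symm, ?_⟩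
    have hsub : K ⊆ {v, q} := by
      intro w hw
      rcases hmem w hw with rfl | rfl | rfl
      · exact Or.inl rfl
      · exact absurd hw hpK
      · exact Or.inr rfl
    exact hK.2 _ hcl2 hsub

end CycleClassify
section Isos
open SimpleGraph Sum

variable {V : Type}

/-- reversing the path swaps the attachment cliques -/
def joinPathSwapIso (H : SimpleGraph V) (A B : Set V) (l : ℕ) :
    joinPath H A B l ≃g joinPath H B A l where
  toEquiv := Equiv.sumCongr (Equiv.refl V) (Fin.revPerm)
  map_rel_iff' := by
    rintro (a | i) (b | j) <;>
      simp only [Equiv.sumCongr_apply, Sum.map_inl, Sum.map_inr, Equiv.refl_apply,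
        Fin.revPerm_apply, joinPath_adj_inl_inl, joinPath_adj_inl_inr,
        joinPath_adj_inr_inl, joinPath_adj_inr_inr, Fin.val_rev]
    · constructor
      · rintro (⟨h, hm⟩ | ⟨h, hm⟩)
        · right; exact ⟨by omega, hm⟩
        · left; exact ⟨by omega, hm⟩
      · rintro (⟨h, hm⟩ | ⟨h, hm⟩)
        · right; exact ⟨by omega, hm⟩
        · left; exact ⟨by omega, hm⟩
    · constructor
      · rintro (⟨h, hm⟩ | ⟨h, hm⟩)
        · right; exact ⟨by omega, hm⟩
        · left; exact ⟨by omega, hm⟩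
      · rintro (⟨h, hm⟩ | ⟨h, hm⟩)
        · right; exact ⟨by omega, hm⟩
        · left; exact ⟨by omega, hm⟩
    · have := i.isLt; have := j.isLt
      omega

/-- transporting the replaced-vertex construction along an isomorphism -/
def transportIso {W : Type} {G : SimpleGraph V} {H : SimpleGraph W} (e : G ≃g H)
    (w : W) (C₁ C₂ : Set W) (t : ℕ) :
    joinPath (G.induce {u : V | u ≠ e.symm w}) {u | e ↑u ∈ C₁} {u | e ↑u ∈ C₂} t ≃g
    joinPath (H.induce {u : W | u ≠ w}) {u | ↑u ∈ C₁} {u | ↑u ∈ C₂} t where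
  toEquiv := Equiv.sumCongr
    { toFun := fun u => ⟨e ↑u, fun h => u.2 (by simpa using congrArg e.symm h)⟩
      invFun := fun u => ⟨e.symm ↑u, fun h => u.2 (by simpa using congrArg e h)⟩
      left_inv := fun u => Subtype.ext (by simp)
      right_inv := fun u => Subtype.ext (by simp) }
    (Equiv.refl (Fin t))
  map_rel_iff' := by
    rintro (a | i) (b | j) <;>
      simp only [Equiv.sumCongr_apply, Sum.map_inl, Sum.map_inr, Equiv.coe_fn_mk,
        Equiv.refl_apply, joinPath_adj_inl_inl, joinPath_adj_inl_inr,
        joinPath_adj_inr_inl, joinPath_adj_inr_inr, comap_adj,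
        Function.Embedding.coe_subtype] <;>
      first
      | exact e.map_rel_iff
      | exact Iff.rfl
      | rfl

end Isos

section GateLR
open SimpleGraph Sum

variable {V : Type}

/-- the "left" maximal clique at path vertex `i` -/
def gateL (A B : Set V) (l : ℕ) (i : Fin l) : Set (V ⊕ Fin l) :=
  if i.val = 0 then lift1 A A B l
  else {inr ⟨i.val - 1, Nat.lt_of_le_of_lt (Nat.sub_le _ _) i.isLt⟩, inr i}

/-- the "right" maximal clique at path vertex `i` -/
def gateR (A B : Set V) (l : ℕ) (i : Fin l) : Set (V ⊕ Fin l) :=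
  if h : i.val = l - 1 then lift1 B A B l
  else {inr i, inr ⟨i.val + 1, by have := i.isLt; omega⟩}

variable {H : SimpleGraph V} {A B : Set V} {l : ℕ}

lemma classify_inr' (hl : 2 ≤ l) (hA : IsMaxClique H A) (hB : IsMaxClique H B)
    (hdisj : Disjoint A B) (hAne : A.Nonempty) (hBne : B.Nonempty)
    {K : Set (V ⊕ Fin l)} (hK : IsMaxClique (joinPath H A B l) K) {i : Fin l}
    (hi : inr i ∈ K) : K = gateL A B l i ∨ K = gateR A B l i := by
  rcases classify_inr hl hA hB hdisj hAne hBne hK hi with ⟨h0, rfl⟩ | ⟨h1, rfl⟩ |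
    ⟨j, k, hjk, rfl, hik⟩
  · left; rw [gateL, if_pos h0]
  · right; rw [gateR, dif_pos h1]
  · have hkl := k.isLt
    have hjl := j.isLt
    rcases hik with rfl | rfl
    · right
      rw [gateR, dif_neg (by omega)]
      have hk : k = ⟨i.val + 1, by omega⟩ := Fin.ext (show k.val = i.val + 1 by omega)
      exact congrArg (fun z : Fin l => ({inr i, inr z} : Set (V ⊕ Fin l))) hk
    · left
      rw [gateL, if_neg (by omega)]
      have hj : j = ⟨i.val - 1, Nat.lt_of_le_of_lt (Nat.sub_le _ _) i.isLt⟩ :=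
        Fin.ext (show j.val = i.val - 1 by omega)
      exact congrArg (fun z : Fin l => ({inr z, inr i} : Set (V ⊕ Fin l))) hj

lemma gateL_ne_gateR (hl : 2 ≤ l) (hdisj : Disjoint A B) (hAne : A.Nonempty)
    (hBne : B.Nonempty) (i : Fin l) : gateL A B l i ≠ gateR A B l i := by
  have hil := i.isLt
  intro h
  rw [gateL, gateR] at h
  by_cases h0 : i.val = 0 <;> by_cases h1 : i.val = l - 1
  · omega
  · rw [if_pos h0, dif_neg h1] at h
    obtain ⟨a, ha⟩ := hAne
    have hmem : (inl a : V ⊕ Fin l) ∈ lift1 A A B l := ha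
    rw [h] at hmem
    simp at hmem
  · rw [if_neg h0, dif_pos h1] at h
    obtain ⟨b, hb⟩ := hBne
    have hmem : (inl b : V ⊕ Fin l) ∈ lift1 B A B l := hb
    rw [← h] at hmem
    simp at hmem
  · rw [if_neg h0, dif_neg h1] at h
    have hmem : (inr ⟨i.val - 1, Nat.lt_of_le_of_lt (Nat.sub_le _ _) i.isLt⟩ : V ⊕ Fin l) ∈
        ({inr i, inr ⟨i.val + 1, by omega⟩} : Set (V ⊕ Fin l)) := by
      rw [← h]; left; rfl
    simp only [Set.mem_insert_iff, Set.mem_singleton_iff, Sum.inr.injEq, Fin.ext_iff,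
      Fin.val_mk] at hmem
    omega

end GateLR

section GateFacts
open SimpleGraph Sum

lemma gate_nonempty : ∀ {V : Type} {G : SimpleGraph V}, IsGate G → Nonempty V := by
  intro V G hG
  induction hG with
  | cycle n hn => exact ⟨⟨0, by omega⟩⟩
  | extend G C C' l hG hC hC' hdisj hl ih => exact ⟨inr ⟨0, by omega⟩⟩
  | iso G H hG e ih => exact ⟨e ih.some⟩

/-- every vertex of a gate is in at most two maximal cliques -/
lemma gate_atmost2 : ∀ {V : Type} {G : SimpleGraph V}, IsGate G →
    ∀ (u : V) (K₁ K₂ K₃ : Set V), IsMaxClique G K₁ → IsMaxClique G K₂ → IsMaxClique G K₃ →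
    u ∈ K₁ → u ∈ K₂ → u ∈ K₃ → K₁ ≠ K₂ → K₁ ≠ K₃ → K₂ ≠ K₃ → False := by
  intro V G hG
  induction hG with
  | cycle n hn =>
    intro u K₁ K₂ K₃ h1 h2 h3 hu1 hu2 hu3 h12 h13 h23
    have c1 := classify_cycle hn h1 hu1
    have c2 := classify_cycle hn h2 hu2
    have c3 := classify_cycle hn h3 hu3
    have key : ∀ K K' : Set (Fin n),
        (∃ p : Fin n, (p.val + 1) % n = u.val ∧ K = {p, u}) →
        (∃ p : Fin n, (p.val + 1) % n = u.val ∧ K' = {p, u}) → K = K' := by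
      rintro K K' ⟨p, hp, rfl⟩ ⟨p', hp', rfl⟩
      have hpp : p = p' := by
        rw [Fin.ext_iff]
        have h1 := p.isLt; have h2 := p'.isLt
        rcases Nat.lt_or_ge (p.val + 1) n with h | h <;>
          rcases Nat.lt_or_ge (p'.val + 1) n with h' | h'
        · rw [Nat.mod_eq_of_lt h] at hp; rw [Nat.mod_eq_of_lt h'] at hp'; omega
        · rw [Nat.mod_eq_of_lt h] at hp
          have e2 : p'.val + 1 = n := by omega
          rw [e2, Nat.mod_self] at hp'; omega
        · rw [Nat.mod_eq_of_lt h'] at hp'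
          have e1 : p.val + 1 = n := by omega
          rw [e1, Nat.mod_self] at hp; omega
        · have e1 : p.val + 1 = n := by omega
          have e2 : p'.val + 1 = n := by omega
          omega
      rw [hpp]
    have key' : ∀ K K' : Set (Fin n),
        (∃ q : Fin n, (u.val + 1) % n = q.val ∧ K = {u, q}) →
        (∃ q : Fin n, (u.val + 1) % n = q.val ∧ K' = {u, q}) → K = K' := by
      rintro K K' ⟨q, hq, rfl⟩ ⟨q', hq', rfl⟩
      have : q = q' := Fin.ext (hq ▸ hq' ▸ rfl)
      rw [this]
    rcases c1 with c1 | c1 <;> rcases c2 with c2 | c2 <;> rcases c3 with c3 | c3 <;>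
      first
      | exact h12 (key _ _ c1 c2)
      | exact h12 (key' _ _ c1 c2)
      | exact h13 (key _ _ c1 c3)
      | exact h13 (key' _ _ c1 c3)
      | exact h23 (key _ _ c2 c3)
      | exact h23 (key' _ _ c2 c3)
  | extend G C C' l hG hC hC' hdisj hl ih =>
    intro u K₁ K₂ K₃ h1 h2 h3 hu1 hu2 hu3 h12 h13 h23
    have hV : Nonempty _ := gate_nonempty hG
    have hAne := maxclique_nonempty hC hV.some
    have hBne := maxclique_nonempty hC' hV.some
    match u with
    | inl x =>
      obtain ⟨D₁, hD₁, hx1, rfl⟩ := classify_inl hl hC hC' hdisj hAne hBne h1 hu1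
      obtain ⟨D₂, hD₂, hx2, rfl⟩ := classify_inl hl hC hC' hdisj hAne hBne h2 hu2
      obtain ⟨D₃, hD₃, hx3, rfl⟩ := classify_inl hl hC hC' hdisj hAne hBne h3 hu3
      exact ih x D₁ D₂ D₃ hD₁ hD₂ hD₃ hx1 hx2 hx3
        (fun h => h12 (h ▸ rfl)) (fun h => h13 (h ▸ rfl)) (fun h => h23 (h ▸ rfl))
    | inr i =>
      rcases classify_inr' hl hC hC' hdisj hAne hBne h1 hu1 with rfl | rfl <;>
        rcases classify_inr' hl hC hC' hdisj hAne hBne h2 hu2 with h2' | h2' <;>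
          rcases classify_inr' hl hC hC' hdisj hAne hBne h3 hu3 with h3' | h3' <;>
            first
            | exact h12 h2'.symm
            | exact h13 h3'.symm
            | exact h23 (h2'.trans h3'.symm)
  | iso G H hG e ih =>
    intro u K₁ K₂ K₃ h1 h2 h3 hu1 hu2 hu3 h12 h13 h23
    have inj : ∀ K K' : Set _, ⇑e ⁻¹' K = ⇑e ⁻¹' K' → K = K' := by
      intro K K' h
      have := congrArg (Set.image ⇑e) h
      rwa [Set.image_preimage_eq _ e.surjective, Set.image_preimage_eq _ e.surjective] at this
    exact ih (e.symm u) (⇑e ⁻¹' K₁) (⇑e ⁻¹' K₂) (⇑e ⁻¹' K₃)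
      (maxclique_preimage e h1) (maxclique_preimage e h2) (maxclique_preimage e h3)
      (by simp [hu1]) (by simp [hu2]) (by simp [hu3])
      (fun h => h12 (inj _ _ h)) (fun h => h13 (inj _ _ h)) (fun h => h23 (inj _ _ h))

end GateFacts
section Main
open SimpleGraph Sum

set_option maxHeartbeats 1000000 in
theorem gate_replace : ∀ {V : Type} {G : SimpleGraph V}, IsGate G →
    ∀ (v : V) (C₁ C₂ : Set V), IsMaxClique G C₁ → IsMaxClique G C₂ →
    v ∈ C₁ → v ∈ C₂ → C₁ ≠ C₂ → C₁ ∩ C₂ = {v} → ∀ t : ℕ, 2 ≤ t →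
    IsGate (joinPath (G.induce {u : V | u ≠ v}) {u : {u : V | u ≠ v} | ↑u ∈ C₁}
      {u : {u : V | u ≠ v} | ↑u ∈ C₂} t) := by
  intro V G hG
  induction hG with
  | cycle n hn =>
    intro v C₁ C₂ h1 h2 hv1 hv2 hne hint t ht
    have hn0 : 0 < n := by omega
    have hv' := v.isLt
    -- uniqueness of predecessor / successor edges
    have puniq : ∀ p p' : Fin n, (p.val + 1) % n = v.val → (p'.val + 1) % n = v.val →
        p = p' := by
      intro p p' hp hp'
      have h1' := p.isLt; have h2' := p'.isLt
      rw [Fin.ext_iff]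
      rcases Nat.lt_or_ge (p.val + 1) n with h | h <;>
        rcases Nat.lt_or_ge (p'.val + 1) n with h' | h'
      · rw [Nat.mod_eq_of_lt h] at hp; rw [Nat.mod_eq_of_lt h'] at hp'; omega
      · rw [Nat.mod_eq_of_lt h] at hp
        have e2 : p'.val + 1 = n := by omega
        rw [e2, Nat.mod_self] at hp'; omega
      · rw [Nat.mod_eq_of_lt h'] at hp'
        have e1 : p.val + 1 = n := by omega
        rw [e1, Nat.mod_self] at hp; omega
      · omega
    have key : ∀ (D₁ D₂ : Set (Fin n)),
        (∃ p : Fin n, (p.val + 1) % n = v.val ∧ D₁ = {p, v}) →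
        (∃ q : Fin n, (v.val + 1) % n = q.val ∧ D₂ = {v, q}) →
        IsGate (joinPath ((SimpleGraph.cycleGraph n).induce {u : Fin n | u ≠ v})
          {u : {u : Fin n | u ≠ v} | ↑u ∈ D₁} {u : {u : Fin n | u ≠ v} | ↑u ∈ D₂} t) := by
      rintro D₁ D₂ ⟨p, hp1, rfl⟩ ⟨q, hq1, rfl⟩
      -- characterizations
      have hpc : (v.val = 0 ∧ p.val = n - 1) ∨ (0 < v.val ∧ p.val = v.val - 1) := by
        have hpl := p.isLt
        rcases Nat.lt_or_ge (p.val + 1) n with h | h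
        · rw [Nat.mod_eq_of_lt h] at hp1; right; omega
        · have e1 : p.val + 1 = n := by omega
          rw [e1, Nat.mod_self] at hp1; left; omega
      have hqc : (v.val + 1 = n ∧ q.val = 0) ∨ (v.val + 1 < n ∧ q.val = v.val + 1) := by
        have hql := q.isLt
        rcases Nat.lt_or_ge (v.val + 1) n with h | h
        · rw [Nat.mod_eq_of_lt h] at hq1; right; omega
        · have e1 : v.val + 1 = n := by omega
          rw [e1, Nat.mod_self] at hq1; left; omega
      -- the shifting function
      set g : ℕ → ℕ := fun j => if v.val + j < n then v.val + j else v.val + j - n with hgdef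
      have hglt : ∀ j, j ≤ n - 1 → g j < n := by
        intro j hj; rw [hgdef]; dsimp only; split <;> omega
      have hgne : ∀ j, 1 ≤ j → j ≤ n - 1 → g j ≠ v.val := by
        intro j hj1 hj2; rw [hgdef]; dsimp only; split <;> omega
      have hgp : ∀ j, 1 ≤ j → j ≤ n - 1 → (g j = p.val ↔ j = n - 1) := by
        intro j hj1 hj2; rw [hgdef]; dsimp only; split <;> rcases hpc with ⟨e1, e2⟩ | ⟨e1, e2⟩ <;>
          constructor <;> intro h <;> omega
      have hgq : ∀ j, 1 ≤ j → j ≤ n - 1 → (g j = q.val ↔ j = 1) := by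
        intro j hj1 hj2; rw [hgdef]; dsimp only; split <;> rcases hqc with ⟨e1, e2⟩ | ⟨e1, e2⟩ <;>
          constructor <;> intro h <;> omega
      have hginj : ∀ j j', 1 ≤ j → j ≤ n - 1 → 1 ≤ j' → j' ≤ n - 1 → g j = g j' → j = j' := by
        intro j j' a1 a2 a3 a4 h; rw [hgdef] at h; dsimp only at h
        split_ifs at h <;> omega
      -- membership
      have hS1 : ∀ x : {u : Fin n // u ≠ v},
          (x ∈ {u : {u : Fin n | u ≠ v} | ↑u ∈ ({p, v} : Set (Fin n))} ↔ (x : Fin n).val = p.val) := by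
        intro x
        simp only [Set.mem_setOf_eq, Set.mem_insert_iff, Set.mem_singleton_iff]
        constructor
        · rintro (h | h)
          · rw [h]
          · exact absurd h x.2
        · intro h; left; exact Fin.ext h
      have hS2 : ∀ x : {u : Fin n // u ≠ v},
          (x ∈ {u : {u : Fin n | u ≠ v} | ↑u ∈ ({v, q} : Set (Fin n))} ↔ (x : Fin n).val = q.val) := by
        intro x
        simp only [Set.mem_setOf_eq, Set.mem_insert_iff, Set.mem_singleton_iff]
        constructor
        · rintro (h | h)
          · exact absurd h x.2
          · rw [h]
        · intro h; right; exact Fin.ext h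
      -- the isomorphism
      set m := n + t - 1 with hm
      have hmn : m = n + t - 1 := hm
      refine IsGate.iso (SimpleGraph.cycleGraph m) _ (IsGate.cycle m (by omega)) ?_
      have fdef : ∀ k : Fin m, True := fun _ => trivial
      refine ⟨Equiv.ofBijective
        (fun k : Fin m => if h : k.val < t then (Sum.inr (⟨k.val, h⟩ : Fin t) :
            {u : Fin n // u ≠ v} ⊕ Fin t)
          else (Sum.inl ⟨⟨g (k.val - t + 1), hglt _ (by have := k.isLt; omega)⟩,
            fun hc => hgne (k.val - t + 1) (by omega) (by have := k.isLt; omega)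
              (congrArg Fin.val hc)⟩ : {u : Fin n // u ≠ v} ⊕ Fin t)) ⟨?_, ?_⟩, ?_⟩
      · -- injective
        intro k k' heq
        have hk := k.isLt; have hk' := k'.isLt
        rw [Fin.ext_iff]
        dsimp only at heq
        split_ifs at heq <;>
          first
          | simpa [Fin.ext_iff] using heq
          | (simp at heq; done)
          | (have := hginj (k.val - t + 1) (k'.val - t + 1) (by omega) (by omega) (by omega)
               (by omega) (by simpa using heq)
             omega)
      · -- surjective
        rintro (⟨u, hu⟩ | i)
        · have hul := u.isLt
          have huv : u.val ≠ v.val := fun h => hu (Fin.ext h)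
          set d : ℕ := if v.val < u.val then u.val - v.val else u.val + n - v.val with hd
          have hd1 : 1 ≤ d := by rw [hd]; split <;> omega
          have hd2 : d ≤ n - 1 := by rw [hd]; split <;> omega
          refine ⟨⟨t - 1 + d, by omega⟩, ?_⟩
          dsimp only
          rw [dif_neg (show ¬ t - 1 + d < t by omega)]
          congr 1
          refine Subtype.ext (Fin.ext ?_)
          simp only [Fin.val_mk]
          have : t - 1 + d - t + 1 = d := by omega
          rw [this, hgdef]
          dsimp only
          rw [hd]
          split_ifs <;> omega
        · exact ⟨⟨i.val, by have := i.isLt; omega⟩, by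
            dsimp only
            rw [dif_pos (by simpa using i.isLt)]⟩
      · -- map_rel_iff
        intro a b
        simp only [Equiv.ofBijective, Equiv.coe_fn_mk]
        have ha' := a.isLt; have hb' := b.isLt
        by_cases ha : a.val < t <;> by_cases hb : b.val < t
        · rw [dif_pos ha, dif_pos hb]
          rw [joinPath_adj_inr_inr, cycle_adj_val]
          simp only [Fin.val_mk]
          constructor
          · intro h; exact ⟨by omega, by omega⟩
          · rintro ⟨h1, h2⟩; omega
        · rw [dif_pos ha, dif_neg hb]
          rw [joinPath_adj_inr_inl, cycle_adj_val]
          rw [hS1, hS2]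
          simp only [Fin.val_mk]
          rw [hgp _ (by omega) (by omega), hgq _ (by omega) (by omega)]
          constructor
          · rintro (⟨h1, h2⟩ | ⟨h1, h2⟩) <;> exact ⟨by omega, by omega⟩
          · rintro ⟨h1, h2⟩
            rcases h2 with h2 | h2 | ⟨h2, h3⟩ | ⟨h2, h3⟩
            · right; exact ⟨by omega, by omega⟩
            · omega
            · left; exact ⟨by omega, by omega⟩
            · omega
        · rw [dif_neg ha, dif_pos hb]
          rw [joinPath_adj_inl_inr, cycle_adj_val]
          rw [hS1, hS2]
          simp only [Fin.val_mk]
          rw [hgp _ (by omega) (by omega), hgq _ (by omega) (by omega)]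
          constructor
          · rintro (⟨h1, h2⟩ | ⟨h1, h2⟩) <;> exact ⟨by omega, by omega⟩
          · rintro ⟨h1, h2⟩
            rcases h2 with h2 | h2 | ⟨h2, h3⟩ | ⟨h2, h3⟩
            · omega
            · right; exact ⟨by omega, by omega⟩
            · omega
            · left; exact ⟨by omega, by omega⟩
        · rw [dif_neg ha, dif_neg hb]
          rw [joinPath_adj_inl_inl, comap_adj, cycle_adj_val, cycle_adj_val]
          simp only [Function.Embedding.coe_subtype, Fin.val_mk]
          have e1 : g (a.val - t + 1) = (if v.val + (a.val - t + 1) < n then v.val + (a.val - t + 1) else v.val + (a.val - t + 1) - n) := by rw [hgdef]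
          have e2 : g (b.val - t + 1) = (if v.val + (b.val - t + 1) < n then v.val + (b.val - t + 1) else v.val + (b.val - t + 1) - n) := by rw [hgdef]
          rw [e1, e2]
          split <;> split <;> omega
    -- dispatch the two orderings
    rcases classify_cycle hn h1 hv1 with c1 | c1 <;> rcases classify_cycle hn h2 hv2 with c2 | c2
    · exfalso
      obtain ⟨p, hp, rfl⟩ := c1; obtain ⟨p', hp', rfl⟩ := c2
      exact hne (by rw [puniq p p' hp hp'])
    · exact key C₁ C₂ c1 c2
    · exact IsGate.iso _ _ (key C₂ C₁ c2 c1)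
        (joinPathSwapIso ((SimpleGraph.cycleGraph n).induce {u : Fin n | u ≠ v}) _ _ t)
    · exfalso
      obtain ⟨q, hq, rfl⟩ := c1; obtain ⟨q', hq', rfl⟩ := c2
      exact hne (by rw [show q = q' from Fin.ext (hq ▸ hq' ▸ rfl)])
  | @extend V₀ G C C' l hG hC hC' hdisj hl ih =>
    intro v C₁ C₂ h1 h2 hv1 hv2 hne hint t ht
    have hV : Nonempty _ := gate_nonempty hG
    have hCne := maxclique_nonempty hC hV.some
    have hC'ne := maxclique_nonempty hC' hV.some
    have hCC' : C ≠ C' := maxclique_ne_of_disjoint hCne hdisj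
    match v with
    | inr i =>
      -- v is a path vertex: the result is a longer path
      have hil := i.isLt
      have key : ∀ (K₁ K₂ : Set (V₀ ⊕ Fin l)), K₁ = gateL C C' l i → K₂ = gateR C C' l i →
          IsGate (joinPath ((joinPath G C C' l).induce {x | x ≠ inr i})
            {x : {x | x ≠ inr i} | ↑x ∈ K₁} {x : {x | x ≠ inr i} | ↑x ∈ K₂} t) := by
        rintro K₁ K₂ rfl rfl
        -- membership characterizations
        have hL1 : ∀ x, (Sum.inl x ∈ gateL C C' l i) ↔ (i.val = 0 ∧ x ∈ C) := by
          intro x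
          rw [gateL]
          split_ifs with h0
          · rw [mem_lift1_inl]
            exact ⟨fun h => ⟨h0, h⟩, fun h => h.2⟩
          · simp [h0]
        have hL2 : ∀ j : Fin l, j ≠ i → (Sum.inr j ∈ gateL C C' l i ↔
            (i.val ≠ 0 ∧ j.val = i.val - 1)) := by
          intro j hj
          rw [gateL]
          split_ifs with h0
          · rw [mem_lift1_inr]
            constructor
            · rintro (⟨hh, _⟩ | ⟨hh, hc⟩)
              · exact absurd (Fin.ext (by omega) : j = i) hj
              · exact absurd hc hCC'
            · rintro ⟨hh, _⟩; exact absurd h0 hh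
          · simp only [Set.mem_insert_iff, Set.mem_singleton_iff, Sum.inr.injEq]
            constructor
            · rintro (hh | hh)
              · exact ⟨h0, congrArg Fin.val hh⟩
              · exact absurd hh hj
            · rintro ⟨_, hh⟩; left; exact Fin.ext (by rw [hh])
        have hR1 : ∀ x, (Sum.inl x ∈ gateR C C' l i) ↔ (i.val = l - 1 ∧ x ∈ C') := by
          intro x
          rw [gateR]
          split_ifs with h0
          · rw [mem_lift1_inl]
            exact ⟨fun h => ⟨h0, h⟩, fun h => h.2⟩
          · simp [h0]
        have hR2 : ∀ j : Fin l, j ≠ i → (Sum.inr j ∈ gateR C C' l i ↔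
            (i.val ≠ l - 1 ∧ j.val = i.val + 1)) := by
          intro j hj
          rw [gateR]
          split_ifs with h0
          · rw [mem_lift1_inr]
            constructor
            · rintro (⟨hh, hc⟩ | ⟨hh, _⟩)
              · exact absurd hc.symm hCC'
              · exact absurd (Fin.ext (by omega) : j = i) hj
            · rintro ⟨hh, _⟩; exact absurd h0 hh
          · simp only [Set.mem_insert_iff, Set.mem_singleton_iff, Sum.inr.injEq]
            constructor
            · rintro (hh | hh)
              · exact absurd hh hj
              · exact ⟨h0, congrArg Fin.val hh⟩
            · rintro ⟨_, hh⟩; right; exact Fin.ext (by rw [hh])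
        set m := l + t - 1 with hm
        set f : (V₀ ⊕ Fin m) → ({x : V₀ ⊕ Fin l | x ≠ inr i} ⊕ Fin t) :=
          fun w => match w with
          | Sum.inl u => Sum.inl ⟨Sum.inl u, fun hc => Sum.inl_ne_inr hc⟩
          | Sum.inr k =>
            if h1 : k.val < i.val then
              Sum.inl ⟨Sum.inr ⟨k.val, by omega⟩,
                fun hc => Fin.ne_of_val_ne (show k.val ≠ i.val by omega)
                  (Sum.inr_injective hc)⟩
            else if h2 : k.val < i.val + t then
              Sum.inr ⟨k.val - i.val, by omega⟩
            else
              Sum.inl ⟨Sum.inr ⟨k.val - t + 1, by have := k.isLt; omega⟩,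
                fun hc => Fin.ne_of_val_ne (show k.val - t + 1 ≠ i.val by omega)
                  (Sum.inr_injective hc)⟩
          with hf
        have hbij : Function.Bijective f := by
          constructor
          · intro a b heq
            match a, b with
            | Sum.inl u, Sum.inl u' => simpa [hf] using heq
            | Sum.inl u, Sum.inr k =>
              exfalso; rw [hf] at heq; dsimp only at heq
              split_ifs at heq <;> simp at heq
            | Sum.inr k, Sum.inl u =>
              exfalso; rw [hf] at heq; dsimp only at heq
              split_ifs at heq <;> simp at heq
            | Sum.inr k, Sum.inr k' =>
              have hk := k.isLt; have hk' := k'.isLt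
              rw [hf] at heq; dsimp only at heq
              rw [Sum.inr.injEq, Fin.ext_iff]
              split_ifs at heq <;>
                simp only [Sum.inl.injEq, Sum.inr.injEq, Subtype.mk.injEq, Fin.mk.injEq] at heq <;>
                omega
          · rintro (⟨(u | j), hj⟩ | k)
            · exact ⟨Sum.inl u, by rw [hf]⟩
            · have hjl := j.isLt
              have hji : j.val ≠ i.val := fun h => hj (congrArg Sum.inr (Fin.ext h))
              rcases Nat.lt_or_ge j.val i.val with h | h
              · refine ⟨Sum.inr ⟨j.val, by omega⟩, ?_⟩
                rw [hf]; dsimp only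
                rw [dif_pos (show j.val < i.val from h)]
              · refine ⟨Sum.inr ⟨j.val + t - 1, by omega⟩, ?_⟩
                rw [hf]; dsimp only
                rw [dif_neg (show ¬ j.val + t - 1 < i.val by omega),
                  dif_neg (show ¬ j.val + t - 1 < i.val + t by omega)]
                exact congrArg Sum.inl (Subtype.ext (congrArg Sum.inr (Fin.ext
                  (show j.val + t - 1 - t + 1 = j.val by omega))))
            · refine ⟨Sum.inr ⟨i.val + k.val, by have := k.isLt; omega⟩, ?_⟩
              rw [hf]; dsimp only
              rw [dif_neg (show ¬ i.val + k.val < i.val by omega),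
                dif_pos (show i.val + k.val < i.val + t by have := k.isLt; omega)]
              exact congrArg Sum.inr (Fin.ext (show i.val + k.val - i.val = k.val by omega))
        -- membership characterizations in val form
        have hL2' : ∀ (jv : ℕ) (hjv : jv < l), jv ≠ i.val →
            ((Sum.inr (⟨jv, hjv⟩ : Fin l) : V₀ ⊕ Fin l) ∈ gateL C C' l i ↔
              (i.val ≠ 0 ∧ jv = i.val - 1)) := by
          intro jv hjv hne'
          rw [hL2 ⟨jv, hjv⟩ (Fin.ne_of_val_ne hne')]
        have hR2' : ∀ (jv : ℕ) (hjv : jv < l), jv ≠ i.val →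
            ((Sum.inr (⟨jv, hjv⟩ : Fin l) : V₀ ⊕ Fin l) ∈ gateR C C' l i ↔
              (i.val ≠ l - 1 ∧ jv = i.val + 1)) := by
          intro jv hjv hne'
          rw [hR2 ⟨jv, hjv⟩ (Fin.ne_of_val_ne hne')]
        have hmix : ∀ (u : V₀) (k : Fin m),
            ((joinPath ((joinPath G C C' l).induce {x | x ≠ inr i})
              {x : {x | x ≠ inr i} | ↑x ∈ gateL C C' l i}
              {x : {x | x ≠ inr i} | ↑x ∈ gateR C C' l i} t).Adj
                (f (Sum.inl u)) (f (Sum.inr k)) ↔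
            (joinPath G C C' m).Adj (Sum.inl u) (Sum.inr k)) := by
          intro u k
          have hkm := k.isLt
          rw [hf]; dsimp only
          rw [joinPath_adj_inl_inr (l := m)]
          split_ifs with hk1 hk2
          · -- k < i
            rw [joinPath_adj_inl_inl, comap_adj]
            simp only [Function.Embedding.coe_subtype]
            rw [joinPath_adj_inl_inr]
            simp only [Fin.val_mk]
            constructor
            · rintro (⟨e1, e2⟩ | ⟨e1, e2⟩)
              · exact Or.inl ⟨by omega, e2⟩
              · exact absurd e1 (by omega)
            · rintro (⟨e1, e2⟩ | ⟨e1, e2⟩)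
              · exact Or.inl ⟨by omega, e2⟩
              · exact absurd e1 (by omega)
          · -- i ≤ k < i + t
            rw [joinPath_adj_inl_inr]
            simp only [Set.mem_setOf_eq, Fin.val_mk]
            rw [hL1, hR1]
            constructor
            · rintro (⟨e1, e2, e3⟩ | ⟨e1, e2, e3⟩)
              · exact Or.inl ⟨by omega, e3⟩
              · exact Or.inr ⟨by omega, e3⟩
            · rintro (⟨e1, e2⟩ | ⟨e1, e2⟩)
              · exact Or.inl ⟨by omega, by omega, e2⟩
              · exact Or.inr ⟨by omega, by omega, e2⟩
          · -- k ≥ i + t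
            rw [joinPath_adj_inl_inl, comap_adj]
            simp only [Function.Embedding.coe_subtype]
            rw [joinPath_adj_inl_inr]
            simp only [Fin.val_mk]
            constructor
            · rintro (⟨e1, e2⟩ | ⟨e1, e2⟩)
              · exact absurd e1 (by omega)
              · exact Or.inr ⟨by omega, e2⟩
            · rintro (⟨e1, e2⟩ | ⟨e1, e2⟩)
              · exact absurd e1 (by omega)
              · exact Or.inr ⟨by omega, e2⟩
        have hpath : ∀ (k k' : Fin m),
            ((joinPath ((joinPath G C C' l).induce {x | x ≠ inr i})
              {x : {x | x ≠ inr i} | ↑x ∈ gateL C C' l i}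
              {x : {x | x ≠ inr i} | ↑x ∈ gateR C C' l i} t).Adj
                (f (Sum.inr k)) (f (Sum.inr k')) ↔
            (joinPath G C C' m).Adj (Sum.inr k) (Sum.inr k')) := by
          intro k k'
          have hkm := k.isLt
          have hkm' := k'.isLt
          rw [hf]; dsimp only
          rw [joinPath_adj_inr_inr (l := m)]
          split_ifs
          all_goals
            first
            | (rw [joinPath_adj_inl_inl, comap_adj]
               simp only [Function.Embedding.coe_subtype]
               try dsimp only
               rw [joinPath_adj_inr_inr]
               try simp only [Fin.val_mk]
               try omega
               done)
            | (rw [joinPath_adj_inr_inr]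
               try simp only [Fin.val_mk]
               try omega
               done)
            | (rw [joinPath_adj_inl_inr]
               simp only [Set.mem_setOf_eq]
               try dsimp only
               try simp only [Fin.val_mk]
               rw [hL2' k.val (by omega) (by omega), hR2' k.val (by omega) (by omega)]
               try omega
               done)
            | (rw [joinPath_adj_inr_inl]
               simp only [Set.mem_setOf_eq]
               try dsimp only
               try simp only [Fin.val_mk]
               rw [hL2' k'.val (by omega) (by omega), hR2' k'.val (by omega) (by omega)]
               try omega
               done)
            | (rw [joinPath_adj_inr_inl]
               simp only [Set.mem_setOf_eq]
               try dsimp only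
               try simp only [Fin.val_mk]
               rw [hL2' (k'.val - t + 1) (by omega) (by omega),
                 hR2' (k'.val - t + 1) (by omega) (by omega)]
               try omega
               done)
            | (rw [joinPath_adj_inl_inr]
               simp only [Set.mem_setOf_eq]
               try dsimp only
               try simp only [Fin.val_mk]
               rw [hL2' (k.val - t + 1) (by omega) (by omega),
                 hR2' (k.val - t + 1) (by omega) (by omega)]
               try omega
               done)
        refine IsGate.iso _ _ (IsGate.extend G C C' m hG hC hC' hdisj (by omega))
          ⟨Equiv.ofBijective f hbij, ?_⟩
        intro a b
        show _ ↔ (joinPath G C C' m).Adj a b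
        have : ∀ x, (Equiv.ofBijective f hbij) x = f x := fun _ => rfl
        rw [this a, this b]
        match a, b with
        | Sum.inl u, Sum.inl u' =>
          rw [hf]; dsimp only
          rw [joinPath_adj_inl_inl, joinPath_adj_inl_inl, comap_adj]
          simp only [Function.Embedding.coe_subtype]
          rw [joinPath_adj_inl_inl]
        | Sum.inl u, Sum.inr k => exact hmix u k
        | Sum.inr k, Sum.inl u =>
          exact ((joinPath ((joinPath G C C' l).induce {x | x ≠ inr i})
              {x : {x | x ≠ inr i} | ↑x ∈ gateL C C' l i}
              {x : {x | x ≠ inr i} | ↑x ∈ gateR C C' l i} t).adj_comm _ _).trans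
            ((hmix u k).trans ((joinPath G C C' m).adj_comm _ _))
        | Sum.inr k, Sum.inr k' => exact hpath k k'

      rcases classify_inr' hl hC hC' hdisj hCne hC'ne h1 hv1 with c1 | c1 <;>
        rcases classify_inr' hl hC hC' hdisj hCne hC'ne h2 hv2 with c2 | c2
      · exact absurd (c1.trans c2.symm) hne
      · exact key C₁ C₂ c1 c2
      · exact IsGate.iso _ _ (key C₂ C₁ c2 c1)
          (joinPathSwapIso ((joinPath G C C' l).induce {x | x ≠ inr i}) _ _ t)
      · exact absurd (c1.trans c2.symm) hne
    | inl u =>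
      obtain ⟨D₁, hD₁, hu1, hC1eq⟩ := classify_inl hl hC hC' hdisj hCne hC'ne h1 hv1
      obtain ⟨D₂, hD₂, hu2, hC2eq⟩ := classify_inl hl hC hC' hdisj hCne hC'ne h2 hv2
      subst hC1eq; subst hC2eq
      have hD12 : D₁ ≠ D₂ := fun h => hne (by rw [h])
      have hDint : D₁ ∩ D₂ = {u} := by
        ext x
        constructor
        · intro hx
          have hmm : (Sum.inl x : V₀ ⊕ Fin l) ∈ lift1 D₁ C C' l ∩ lift1 D₂ C C' l :=
            ⟨hx.1, hx.2⟩
          rw [hint] at hmm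
          rw [Set.mem_singleton_iff] at hmm
          rw [Set.mem_singleton_iff]
          exact Sum.inl_injective hmm
        · intro hx
          rw [Set.mem_singleton_iff] at hx
          subst hx
          exact ⟨hu1, hu2⟩
      have huniq : ∀ E, IsMaxClique G E → u ∈ E → E = D₁ ∨ E = D₂ := by
        intro E hE huE
        by_contra hcon
        push_neg at hcon
        exact gate_atmost2 hG u E D₁ D₂ hE hD₁ hD₂ huE hu1 hu2 hcon.1 hcon.2 hD12
      have hproper : ∀ E : Set V₀, IsMaxClique G E → ∃ x ∈ E, x ≠ u := by
        intro E hE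
        by_contra hcon
        push_neg at hcon
        have hEne := maxclique_nonempty hE u
        have hEu : E = {u} := by
          ext x
          constructor
          · intro hx; exact hcon x hx
          · intro hx
            rw [Set.mem_singleton_iff] at hx
            subst hx
            obtain ⟨y, hy⟩ := hEne
            have := hcon y hy
            subst this
            exact hy
        have he1 : E = D₁ := hE.2 D₁ hD₁.1 (by
          rw [hEu]; intro z hz; rw [Set.mem_singleton_iff] at hz; subst hz; exact hu1)
        have he2 : E = D₂ := hE.2 D₂ hD₂.1 (by
          rw [hEu]; intro z hz; rw [Set.mem_singleton_iff] at hz; subst hz; exact hu2)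
        exact hD12 (he1.symm.trans he2)
      have hW : IsGate (joinPath (G.induce {x : V₀ | x ≠ u})
          {x : {x : V₀ | x ≠ u} | ↑x ∈ D₁} {x : {x : V₀ | x ≠ u} | ↑x ∈ D₂} t) :=
        ih u D₁ D₂ hD₁ hD₂ hu1 hu2 hD12 hDint t ht
      have htrans : ∀ E, IsMaxClique G E → ∀ F, IsMaxClique G F → u ∈ F →
          (({x : {x : V₀ | x ≠ u} | ↑x ∈ E} : Set _) = {x : {x : V₀ | x ≠ u} | ↑x ∈ F} ↔
            E = F) := by
        intro E hE F hF huF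
        constructor
        · intro h
          refine hE.2 F hF.1 ?_
          intro x hx
          by_cases hxu : x = u
          · subst hxu; exact huF
          · have hmm : (⟨x, hxu⟩ : {x : V₀ | x ≠ u}) ∈ {x : {x : V₀ | x ≠ u} | ↑x ∈ E} := hx
            rw [h] at hmm
            exact hmm
        · intro h; rw [h]
      have hkey : ∀ E, IsMaxClique G E →
          IsMaxClique (joinPath (G.induce {x : V₀ | x ≠ u})
            {x : {x : V₀ | x ≠ u} | ↑x ∈ D₁} {x : {x : V₀ | x ≠ u} | ↑x ∈ D₂} t)
            (lift1 {x : {x : V₀ | x ≠ u} | ↑x ∈ E}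
              {x : {x : V₀ | x ≠ u} | ↑x ∈ D₁} {x : {x : V₀ | x ≠ u} | ↑x ∈ D₂} t) := by
        intro E hE
        have hEne' : ({x : {x : V₀ | x ≠ u} | ↑x ∈ E}).Nonempty := by
          obtain ⟨x, hx, hxu⟩ := hproper E hE
          exact ⟨⟨x, hxu⟩, hx⟩
        have hDdisj : Disjoint ({x : {x : V₀ | x ≠ u} | ↑x ∈ D₁} : Set _)
            {x : {x : V₀ | x ≠ u} | ↑x ∈ D₂} := by
          rw [Set.disjoint_left]
          intro x hx hx'
          have : (↑x : V₀) ∈ D₁ ∩ D₂ := ⟨hx, hx'⟩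
          rw [hDint, Set.mem_singleton_iff] at this
          exact x.2 this
        by_cases hE1 : E = D₁
        · subst hE1
          exact lift1_maxclique_left ht
            (fun x hx y hy hxy => hD₁.1 hx hy (fun h => hxy (Subtype.ext h)))
            hEne' hDdisj
        · by_cases hE2 : E = D₂
          · subst hE2
            exact lift1_maxclique_right ht
              (fun x hx y hy hxy => hD₂.1 hx hy (fun h => hxy (Subtype.ext h)))
              hEne' hDdisj
          · have huE : u ∉ E := fun h => (huniq E hE h).elim hE1 hE2
            refine lift1_maxclique_other ht (maxclique_induce huE hE) hEne' ?_ ?_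
            · intro hsub
              refine hE1 (hE.2 D₁ hD₁.1 ?_)
              intro x hx
              have hxu : x ≠ u := fun h => huE (h ▸ hx)
              exact hsub (show (⟨x, hxu⟩ : {x : V₀ | x ≠ u}) ∈ _ from hx)
            · intro hsub
              refine hE2 (hE.2 D₂ hD₂.1 ?_)
              intro x hx
              have hxu : x ≠ u := fun h => huE (h ▸ hx)
              exact hsub (show (⟨x, hxu⟩ : {x : V₀ | x ≠ u}) ∈ _ from hx)
      have hAmax := hkey C hC
      have hBmax := hkey C' hC'
      have hABdisj : Disjoint
          (lift1 {x : {x : V₀ | x ≠ u} | ↑x ∈ C}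
            {x : {x : V₀ | x ≠ u} | ↑x ∈ D₁} {x : {x : V₀ | x ≠ u} | ↑x ∈ D₂} t)
          (lift1 {x : {x : V₀ | x ≠ u} | ↑x ∈ C'}
            {x : {x : V₀ | x ≠ u} | ↑x ∈ D₁} {x : {x : V₀ | x ≠ u} | ↑x ∈ D₂} t) := by
        rw [Set.disjoint_left]
        rintro (x | j) hx hx'
        · exact (Set.disjoint_left.mp hdisj hx) hx'
        · rw [mem_lift1_inr] at hx hx'
          rcases hx with ⟨e1, e2⟩ | ⟨e1, e2⟩ <;> rcases hx' with ⟨e1', e2'⟩ | ⟨e1', e2'⟩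
          · exact hCC' (((htrans C hC D₁ hD₁ hu1).mp e2).trans
              ((htrans C' hC' D₁ hD₁ hu1).mp e2').symm)
          · omega
          · omega
          · exact hCC' (((htrans C hC D₂ hD₂ hu2).mp e2).trans
              ((htrans C' hC' D₂ hD₂ hu2).mp e2').symm)
      -- membership characterizations for the path part of the lifted cliques
      have hmemA : ∀ k : Fin t, ((Sum.inr k : {x : V₀ | x ≠ u} ⊕ Fin t) ∈
          lift1 {x : {x : V₀ | x ≠ u} | ↑x ∈ C}
            {x : {x : V₀ | x ≠ u} | ↑x ∈ D₁} {x : {x : V₀ | x ≠ u} | ↑x ∈ D₂} t) ↔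
          ((k.val = 0 ∧ C = D₁) ∨ (k.val = t - 1 ∧ C = D₂)) := by
        intro k
        rw [mem_lift1_inr, htrans C hC D₁ hD₁ hu1, htrans C hC D₂ hD₂ hu2]
      have hmemB : ∀ k : Fin t, ((Sum.inr k : {x : V₀ | x ≠ u} ⊕ Fin t) ∈
          lift1 {x : {x : V₀ | x ≠ u} | ↑x ∈ C'}
            {x : {x : V₀ | x ≠ u} | ↑x ∈ D₁} {x : {x : V₀ | x ≠ u} | ↑x ∈ D₂} t) ↔
          ((k.val = 0 ∧ C' = D₁) ∨ (k.val = t - 1 ∧ C' = D₂)) := by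
        intro k
        rw [mem_lift1_inr, htrans C' hC' D₁ hD₁ hu1, htrans C' hC' D₂ hD₂ hu2]
      refine IsGate.iso _ _ (IsGate.extend _ _ _ l hW hAmax hBmax hABdisj hl)
        ⟨⟨fun w => match w with
            | Sum.inl (Sum.inl x) =>
              Sum.inl ⟨Sum.inl ↑x, fun hc => x.2 (Sum.inl_injective hc)⟩
            | Sum.inl (Sum.inr k) => Sum.inr k
            | Sum.inr j => Sum.inl ⟨Sum.inr j, fun hc => Sum.inr_ne_inl hc⟩,
          fun w => match w with
            | Sum.inl ⟨Sum.inl y, h⟩ =>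
              Sum.inl (Sum.inl ⟨y, fun hy => h (congrArg Sum.inl hy)⟩)
            | Sum.inl ⟨Sum.inr j, _⟩ => Sum.inr j
            | Sum.inr k => Sum.inl (Sum.inr k),
          ?_, ?_⟩, ?_⟩
      · rintro ((x | k) | j) <;> rfl
      · rintro (⟨(y | j), h⟩ | k) <;> rfl
      · intro a b
        match a, b with
        | Sum.inl (Sum.inl x), Sum.inl (Sum.inl y) => exact Iff.rfl
        | Sum.inl (Sum.inl x), Sum.inl (Sum.inr k) => exact Iff.rfl
        | Sum.inl (Sum.inr k), Sum.inl (Sum.inl y) => exact Iff.rfl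
        | Sum.inl (Sum.inr k), Sum.inl (Sum.inr k') => exact Iff.rfl
        | Sum.inl (Sum.inl x), Sum.inr j => exact Iff.rfl
        | Sum.inr j, Sum.inl (Sum.inl x) => exact Iff.rfl
        | Sum.inr j, Sum.inr j' => exact Iff.rfl
        | Sum.inl (Sum.inr k), Sum.inr j =>
          show ((k.val = 0 ∧ (Sum.inr j : V₀ ⊕ Fin l) ∈ lift1 D₁ C C' l) ∨
              (k.val = t - 1 ∧ (Sum.inr j : V₀ ⊕ Fin l) ∈ lift1 D₂ C C' l)) ↔ _
          rw [mem_lift1_inr, mem_lift1_inr]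
          show _ ↔ ((j.val = 0 ∧ Sum.inr k ∈ _) ∨ (j.val = l - 1 ∧ Sum.inr k ∈ _))
          rw [hmemA k, hmemB k]
          constructor
          · rintro (⟨hk, (⟨hj, he⟩ | ⟨hj, he⟩)⟩ | ⟨hk, (⟨hj, he⟩ | ⟨hj, he⟩)⟩)
            · exact Or.inl ⟨hj, Or.inl ⟨hk, he.symm⟩⟩
            · exact Or.inr ⟨hj, Or.inl ⟨hk, he.symm⟩⟩
            · exact Or.inl ⟨hj, Or.inr ⟨hk, he.symm⟩⟩
            · exact Or.inr ⟨hj, Or.inr ⟨hk, he.symm⟩⟩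
          · rintro (⟨hj, (⟨hk, he⟩ | ⟨hk, he⟩)⟩ | ⟨hj, (⟨hk, he⟩ | ⟨hk, he⟩)⟩)
            · exact Or.inl ⟨hk, Or.inl ⟨hj, he.symm⟩⟩
            · exact Or.inr ⟨hk, Or.inl ⟨hj, he.symm⟩⟩
            · exact Or.inl ⟨hk, Or.inr ⟨hj, he.symm⟩⟩
            · exact Or.inr ⟨hk, Or.inr ⟨hj, he.symm⟩⟩
        | Sum.inr j, Sum.inl (Sum.inr k) =>
          show ((k.val = 0 ∧ (Sum.inr j : V₀ ⊕ Fin l) ∈ lift1 D₁ C C' l) ∨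
              (k.val = t - 1 ∧ (Sum.inr j : V₀ ⊕ Fin l) ∈ lift1 D₂ C C' l)) ↔ _
          rw [mem_lift1_inr, mem_lift1_inr]
          show _ ↔ ((j.val = 0 ∧ Sum.inr k ∈ _) ∨ (j.val = l - 1 ∧ Sum.inr k ∈ _))
          rw [hmemA k, hmemB k]
          constructor
          · rintro (⟨hk, (⟨hj, he⟩ | ⟨hj, he⟩)⟩ | ⟨hk, (⟨hj, he⟩ | ⟨hj, he⟩)⟩)
            · exact Or.inl ⟨hj, Or.inl ⟨hk, he.symm⟩⟩
            · exact Or.inr ⟨hj, Or.inl ⟨hk, he.symm⟩⟩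
            · exact Or.inl ⟨hj, Or.inr ⟨hk, he.symm⟩⟩
            · exact Or.inr ⟨hj, Or.inr ⟨hk, he.symm⟩⟩
          · rintro (⟨hj, (⟨hk, he⟩ | ⟨hk, he⟩)⟩ | ⟨hj, (⟨hk, he⟩ | ⟨hk, he⟩)⟩)
            · exact Or.inl ⟨hk, Or.inl ⟨hj, he.symm⟩⟩
            · exact Or.inr ⟨hk, Or.inl ⟨hj, he.symm⟩⟩
            · exact Or.inl ⟨hk, Or.inr ⟨hj, he.symm⟩⟩
            · exact Or.inr ⟨hk, Or.inr ⟨hj, he.symm⟩⟩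


  | @iso V₀ W₀ G H hG e ih =>
    intro v C₁ C₂ h1 h2 hv1 hv2 hne hint t ht
    have inj : ∀ K K' : Set _, ⇑e ⁻¹' K = ⇑e ⁻¹' K' → K = K' := by
      intro K K' h
      have := congrArg (Set.image ⇑e) h
      rwa [Set.image_preimage_eq _ e.surjective, Set.image_preimage_eq _ e.surjective] at this
    have hpre : ⇑e ⁻¹' C₁ ∩ ⇑e ⁻¹' C₂ = {e.symm v} := by
      rw [← Set.preimage_inter, hint]
      ext x
      simp only [Set.mem_preimage, Set.mem_singleton_iff]
      constructor
      · intro h; rw [← h]; simp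
      · intro h; rw [h]; simp
    have hG' := ih (e.symm v) (⇑e ⁻¹' C₁) (⇑e ⁻¹' C₂)
      (maxclique_preimage e h1) (maxclique_preimage e h2)
      (by simp [hv1]) (by simp [hv2])
      (fun h => hne (inj _ _ h)) hpre t ht
    exact IsGate.iso _ _ hG' (transportIso e v C₁ C₂ t)

end Main

theorem stmt5 {V : Type} (G : SimpleGraph V) (hG : IsGate G) (v : V)
    (C₁ C₂ : Set V) (h1 : IsMaxClique G C₁) (h2 : IsMaxClique G C₂)
    (hv1 : v ∈ C₁) (hv2 : v ∈ C₂) (hne : C₁ ≠ C₂) (hint : C₁ ∩ C₂ = {v})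
    (t : ℕ) (ht : 2 ≤ t) :
    IsGate (joinPath (G.induce {u : V | u ≠ v})
      {u : {u : V | u ≠ v} | ↑u ∈ C₁} {u : {u : V | u ≠ v} | ↑u ∈ C₂} t) := by
  exact gate_replace hG v C₁ C₂ h1 h2 hv1 hv2 hne hint t ht
end
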